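/- arXiv:2106.09142 — 10 statements merged into one kernel-verified Lean document; each statement's English description precedes it below -/
import Mathlib

section
/- Irreducibility of the volleyball chain: the submonoid of Equiv.Perm (Fin 24) generated by the step set S is everything, i.e. Submonoid.closure S = ⊤. Equivalently, every permutation of the 24 positions is the composite gₙ ∘ ⋯ ∘ g₁ of some finite word g₁,…,gₙ of elements of S. -/
set_option maxRecDepth 10000

namespace Volleyball

/-- Rotation of quadrant A: the 6-cycle (0 1 2 8 7 6). -/
def rA : Equiv.Perm (Fin 24) := ([0,1,2,8,7,6] : List (Fin 24)).formPerm
/-- Rotation of quadrant B: the 6-cycle (3 4 5 11 10 9). -/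
def rB : Equiv.Perm (Fin 24) := ([3,4,5,11,10,9] : List (Fin 24)).formPerm
/-- Rotation of quadrant C: the 6-cycle (12 13 14 20 19 18). -/
def rC : Equiv.Perm (Fin 24) := ([12,13,14,20,19,18] : List (Fin 24)).formPerm
/-- Rotation of quadrant D: the 6-cycle (15 16 17 23 22 21). -/
def rD : Equiv.Perm (Fin 24) := ([15,16,17,23,22,21] : List (Fin 24)).formPerm

/-- The migration E = (6 9 17 14)(7 10 16 13)(8 11 15 12). -/
def E : Equiv.Perm (Fin 24) :=
  ([6,9,17,14] : List (Fin 24)).formPerm *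
  ([7,10,16,13] : List (Fin 24)).formPerm *
  ([8,11,15,12] : List (Fin 24)).formPerm

/-- The step set of the volleyball chain. -/
def S : Set (Equiv.Perm (Fin 24)) :=
  { g | ∃ x₁ x₂ x₃ x₄ : Fin 6,
      (((x₁ : ℕ) : ZMod 6) - ((x₂ : ℕ) : ZMod 6) = -1 ∨
       ((x₁ : ℕ) : ZMod 6) - ((x₂ : ℕ) : ZMod 6) = 0 ∨
       ((x₁ : ℕ) : ZMod 6) - ((x₂ : ℕ) : ZMod 6) = 1) ∧
      (((x₃ : ℕ) : ZMod 6) - ((x₄ : ℕ) : ZMod 6) = -1 ∨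
       ((x₃ : ℕ) : ZMod 6) - ((x₄ : ℕ) : ZMod 6) = 0 ∨
       ((x₃ : ℕ) : ZMod 6) - ((x₄ : ℕ) : ZMod 6) = 1) ∧
      g = E * rA ^ (x₁ : ℕ) * rC ^ (x₂ : ℕ) * rB ^ (x₃ : ℕ) * rD ^ (x₄ : ℕ) }

/-! ### Auxiliary material -/

/-- A 24-cycle expressible in the generators. -/
def cyc : List (Fin 24) :=
  [0,1,2,11,16,14,20,19,18,8,10,17,23,22,21,12,7,9,3,4,5,15,13,6]

/-- The word `E * rD * rC * rB * rA` is a 24-cycle. -/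
def σ0 : Equiv.Perm (Fin 24) := E * rD * rC * rB * rA

/-- A word whose 5th power is the transposition (5 15). -/
def g0 : Equiv.Perm (Fin 24) := rB * rB * E * rB * E * E * rC * rC * E

def c1 : Equiv.Perm (Fin 24) := ([3,11,9,4,10] : List (Fin 24)).formPerm
def c2 : Equiv.Perm (Fin 24) := ([16,20,18,17,19] : List (Fin 24)).formPerm
def t0 : Equiv.Perm (Fin 24) := Equiv.swap 5 15

lemma hσ : σ0 = cyc.formPerm := by ext i; fin_cases i <;> rfl
lemma hg0 : g0 = t0 * c1 * c2 := by ext i; fin_cases i <;> rfl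
lemma hcomm1 : Commute t0 c1 := by ext i; fin_cases i <;> rfl
lemma hcomm2 : Commute t0 c2 := by ext i; fin_cases i <;> rfl
lemma hcomm3 : Commute c1 c2 := by ext i; fin_cases i <;> rfl
lemma ht5 : t0 ^ 5 = t0 := by ext i; fin_cases i <;> rfl
lemma hc15 : c1 ^ 5 = 1 := by ext i; fin_cases i <;> rfl
lemma hc25 : c2 ^ 5 = 1 := by ext i; fin_cases i <;> rfl

lemma hg5 : g0 ^ 5 = t0 := by
  rw [hg0, (hcomm2.mul_left hcomm3).mul_pow, hcomm1.mul_pow, ht5, hc15, hc25,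
    mul_one, mul_one]

lemma hE_mem : E ∈ S := by
  refine ⟨0, 0, 0, 0, Or.inr (Or.inl (by decide)), Or.inr (Or.inl (by decide)), ?_⟩
  simp
lemma hEA_mem : E * rA ∈ S := by
  refine ⟨1, 0, 0, 0, Or.inr (Or.inr (by decide)), Or.inr (Or.inl (by decide)), ?_⟩
  simp
lemma hEB_mem : E * rB ∈ S := by
  refine ⟨0, 0, 1, 0, Or.inr (Or.inl (by decide)), Or.inr (Or.inr (by decide)), ?_⟩
  simp
lemma hEC_mem : E * rC ∈ S := by
  refine ⟨0, 1, 0, 0, Or.inl (by decide), Or.inr (Or.inl (by decide)), ?_⟩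
  simp
lemma hED_mem : E * rD ∈ S := by
  refine ⟨0, 0, 0, 1, Or.inr (Or.inl (by decide)), Or.inl (by decide), ?_⟩
  simp

lemma subgroup_closure_top : Subgroup.closure S = ⊤ := by
  set H := Subgroup.closure S with hH
  have hE : E ∈ H := Subgroup.subset_closure hE_mem
  have gen : ∀ g : Equiv.Perm (Fin 24), E * g ∈ S → g ∈ H := by
    intro g hg
    have h := mul_mem (inv_mem hE) (Subgroup.subset_closure hg)
    rwa [← mul_assoc, inv_mul_cancel, one_mul] at h
  have hA : rA ∈ H := gen _ hEA_mem
  have hB : rB ∈ H := gen _ hEB_mem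
  have hC : rC ∈ H := gen _ hEC_mem
  have hD : rD ∈ H := gen _ hED_mem
  have hσH : σ0 ∈ H := mul_mem (mul_mem (mul_mem (mul_mem hE hD) hC) hB) hA
  have hgH : g0 ∈ H :=
    mul_mem (mul_mem (mul_mem (mul_mem (mul_mem (mul_mem (mul_mem (mul_mem
      hB hB) hE) hB) hE) hE) hC) hC) hE
  have htH : t0 ∈ H := hg5 ▸ pow_mem hgH 5
  have h1 : σ0.IsCycle := by
    rw [hσ]; exact List.isCycle_formPerm (by decide) (by decide)
  have h2 : σ0.support = Finset.univ := by
    rw [hσ, List.support_formPerm_of_nodup cyc (by decide) (by decide)]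
    decide
  have htop := Equiv.Perm.closure_cycle_adjacent_swap h1 h2 5
  have hss : σ0 5 = (15 : Fin 24) := rfl
  rw [eq_top_iff, ← htop]
  refine (Subgroup.closure_le H).mpr ?_
  rintro x hx
  rcases hx with rfl | hx
  · exact hσH
  · rw [Set.mem_singleton_iff] at hx
    subst hx
    rw [hss]
    exact htH

/-- Irreducibility: the submonoid generated by the step set S is everything;
equivalently every permutation is the composite gₙ ∘ ⋯ ∘ g₁ of a word in S. -/
theorem irreducible :
    Submonoid.closure S = ⊤ ∧
    ∀ σ : Equiv.Perm (Fin 24), ∃ l : List (Equiv.Perm (Fin 24)),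
      (∀ g ∈ l, g ∈ S) ∧ l.reverse.prod = σ := by
  have hmono : Submonoid.closure S = ⊤ := by
    set K : Subgroup (Equiv.Perm (Fin 24)) :=
      { Submonoid.closure S with
        inv_mem' := by
          intro x hx
          have hx' : x ∈ Submonoid.closure S := hx
          have hord : 0 < orderOf x := orderOf_pos x
          have h1 : x * x ^ (orderOf x - 1) = 1 := by
            rw [← pow_succ', Nat.sub_add_cancel hord, pow_orderOf_eq_one]
          have h2 : x ^ (orderOf x - 1) = x⁻¹ :=
            eq_inv_of_mul_eq_one_right h1
          show x⁻¹ ∈ Submonoid.closure S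
          exact h2 ▸ pow_mem hx' _ } with hK
    have hle : Subgroup.closure S ≤ K :=
      (Subgroup.closure_le K).mpr (fun x hx => Submonoid.subset_closure hx)
    rw [subgroup_closure_top] at hle
    refine (Submonoid.eq_top_iff' _).mpr (fun x => ?_)
    exact hle (Subgroup.mem_top x)
  refine ⟨hmono, fun σ => ?_⟩
  have hσS : σ ∈ Submonoid.closure S := by rw [hmono]; trivial
  obtain ⟨l, hl, hp⟩ := Submonoid.exists_list_of_mem_closure hσS
  exact ⟨l.reverse, fun g hg => hl g (List.mem_reverse.mp hg),
    by rw [List.reverse_reverse]; exact hp⟩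

end Volleyball
end

section
/- Each single-quadrant rotation can be realized by the chain while fixing all other players: for each Q ∈ {A, B, C, D} there is a word of length 4 in S whose composite is r_Q (for example, for Q = B the word E∘r_B, E, E, E, whose composite is E⁴ ∘ r_B = r_B). In particular r_A, r_B, r_C, r_D and all their powers belong to Submonoid.closure S. -/
namespace Volleyball

set_option maxHeartbeats 2000000 in
set_option maxRecDepth 10000 in
/-- Each single-quadrant rotation is realized by a word of length 4 in S, and
all powers of the rotations lie in the closure of S. -/
theorem rotations_realizable :
    (∀ r ∈ ({rA, rB, rC, rD} : Set (Equiv.Perm (Fin 24))),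
      ∃ l : List (Equiv.Perm (Fin 24)),
        (∀ g ∈ l, g ∈ S) ∧ l.length = 4 ∧ l.reverse.prod = r) ∧
    (∀ r ∈ ({rA, rB, rC, rD} : Set (Equiv.Perm (Fin 24))),
      ∀ n : ℕ, r ^ n ∈ Submonoid.closure S) := by
  have E4 : E ^ 4 = 1 := by
    set_option maxRecDepth 10000 in decide
  have hE : E ∈ S := ⟨0, 0, 0, 0, Or.inr (Or.inl rfl), Or.inr (Or.inl rfl), by
    simp⟩
  have hA : E * rA ∈ S := ⟨1, 0, 0, 0, Or.inr (Or.inr (by decide)),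
    Or.inr (Or.inl rfl), by simp⟩
  have hB : E * rB ∈ S := ⟨0, 0, 1, 0, Or.inr (Or.inl rfl),
    Or.inr (Or.inr (by decide)), by simp⟩
  have hC : E * rC ∈ S := ⟨0, 1, 0, 0, Or.inl (by decide),
    Or.inr (Or.inl rfl), by simp⟩
  have hD : E * rD ∈ S := ⟨0, 0, 0, 1, Or.inr (Or.inl rfl),
    Or.inl (by decide), by simp⟩
  have key : ∀ r : Equiv.Perm (Fin 24), E * r ∈ S →
      ∃ l : List (Equiv.Perm (Fin 24)),
        (∀ g ∈ l, g ∈ S) ∧ l.length = 4 ∧ l.reverse.prod = r := by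
    intro r hr
    refine ⟨[E * r, E, E, E], ?_, rfl, ?_⟩
    · intro g hg
      simp only [List.mem_cons, List.not_mem_nil, or_false] at hg
      rcases hg with h | h | h | h <;> subst h
      · exact hr
      · exact hE
      · exact hE
      · exact hE
    · simp only [List.reverse_cons, List.reverse_nil, List.nil_append,
        List.cons_append, List.singleton_append, List.prod_cons, List.prod_nil,
        mul_one]
      have h : E * (E * (E * (E * r))) = E ^ 4 * r := by
        simp [pow_succ, mul_assoc]
      rw [h, E4, one_mul]
  have main : ∀ r ∈ ({rA, rB, rC, rD} : Set (Equiv.Perm (Fin 24))),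
      ∃ l : List (Equiv.Perm (Fin 24)),
        (∀ g ∈ l, g ∈ S) ∧ l.length = 4 ∧ l.reverse.prod = r := by
    intro r hr
    rcases hr with h | h | h | h <;> subst h
    · exact key _ hA
    · exact key _ hB
    · exact key _ hC
    · exact key _ hD
  refine ⟨main, fun r hr n => ?_⟩
  obtain ⟨l, hl, -, hprod⟩ := main r hr
  have hrmem : r ∈ Submonoid.closure S := by
    rw [← hprod]
    exact Submonoid.list_prod_mem _ fun g hg =>
      Submonoid.subset_closure (hl g (List.mem_reverse.mp hg))
  exact pow_mem hrmem n

end Volleyball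
end

section
/- The effect of the sequence X: the permutation ξ ∈ Equiv.Perm (Fin 24) given in cycle notation by ξ = (0 1)(3 7 4)(5 6 8), which transposes positions 0 and 1, cycles 3→7→4→3 and 5→6→8→5, and fixes all other positions, belongs to Submonoid.closure S. -/
namespace Volleyball

set_option maxRecDepth 40000 in
/-- The effect ξ = (0 1)(3 7 4)(5 6 8) of the sequence X lies in the closure of S. -/
theorem xi_mem_closure :
    Equiv.swap (0 : Fin 24) 1 *
      ([3,7,4] : List (Fin 24)).formPerm *
      ([5,6,8] : List (Fin 24)).formPerm ∈ Submonoid.closure S := by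
  have hE : E ∈ Submonoid.closure S :=
    Submonoid.subset_closure ⟨0, 0, 0, 0, by decide, by decide, by decide⟩
  have hA : rA ∈ Submonoid.closure S := by
    have hEA : E * rA ∈ S := ⟨1, 0, 0, 0, by decide, by decide, by decide⟩
    have h4 : E ^ 3 * (E * rA) = rA := by decide
    exact h4 ▸ mul_mem (pow_mem hE 3) (Submonoid.subset_closure hEA)
  have hB : rB ∈ Submonoid.closure S := by
    have hEB : E * rB ∈ S := ⟨0, 0, 1, 0, by decide, by decide, by decide⟩
    have h4 : E ^ 3 * (E * rB) = rB := by decide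
    exact h4 ▸ mul_mem (pow_mem hE 3) (Submonoid.subset_closure hEB)
  have hC1 : E ^ 3 * rB * rA ^ 5 =
      ([0,14,17,9,3,4,5,8,2,1] : List (Fin 24)).formPerm *
      ([6,13,16,10] : List (Fin 24)).formPerm *
      ([7,12,15,11] : List (Fin 24)).formPerm := by decide
  have hC2 : E * rA ^ 5 * E ^ 3 =
      ([0,9,10,11,2,1] : List (Fin 24)).formPerm := by decide
  have hC3 : rA * rB ^ 5 * E ^ 3 =
      ([0,1,2,8,12,15,5,4,3,9] : List (Fin 24)).formPerm *
      ([6,14,17,10] : List (Fin 24)).formPerm *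
      ([7,13,16,11] : List (Fin 24)).formPerm := by decide
  have hC4 : rB ^ 5 * E * rB ^ 5 =
      ([3,17,14,6,10,15,12,8,5] : List (Fin 24)).formPerm *
      ([4,9,16,13,7,11] : List (Fin 24)).formPerm := by decide
  have hC5 : rA * E * rA ^ 5 =
      ([0,9,17,14] : List (Fin 24)).formPerm *
      ([6,10,16,13] : List (Fin 24)).formPerm *
      ([7,11,15,12] : List (Fin 24)).formPerm := by decide
  have key : Equiv.swap (0 : Fin 24) 1 *
      ([3,7,4] : List (Fin 24)).formPerm *
      ([5,6,8] : List (Fin 24)).formPerm =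
      (E ^ 3 * rB * rA ^ 5) * (E * rA ^ 5 * E ^ 3) * (rA * rB ^ 5 * E ^ 3) *
        (rB ^ 5 * E * rB ^ 5) * (rA * E * rA ^ 5) := by
    rw [hC1, hC2, hC3, hC4, hC5]; decide
  rw [key]
  have m1 := mul_mem (mul_mem (pow_mem hE 3) hB) (pow_mem hA 5)
  have m2 := mul_mem (mul_mem hE (pow_mem hA 5)) (pow_mem hE 3)
  have m3 := mul_mem (mul_mem hA (pow_mem hB 5)) (pow_mem hE 3)
  have m4 := mul_mem (mul_mem (pow_mem hB 5) hE) (pow_mem hB 5)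
  have m5 := mul_mem (mul_mem hA hE) (pow_mem hA 5)
  exact mul_mem (mul_mem (mul_mem (mul_mem m1 m2) m3) m4) m5

end Volleyball
end

section
/- The transposition sequence H: there is a word of length 340 in S whose composite is the transposition Equiv.swap 0 8 (swapping the back-left position 0 and the front-right position 8 of quadrant A, which have two spaces in between along the rotation cycle, and fixing all other positions); in particular Equiv.swap 0 8 ∈ Submonoid.closure S. -/
set_option maxRecDepth 100000
set_option maxHeartbeats 4000000

namespace Volleyball

def cs0000 : Equiv.Perm (Fin 24) :=
  ⟨![0, 1, 2, 3, 4, 5, 9, 10, 11, 17, 16, 15, 8, 7, 6, 12, 13, 14, 18, 19, 20, 21, 22, 23], ![0, 1, 2, 3, 4, 5, 14, 13, 12, 6, 7, 8, 15, 16, 17, 11, 10, 9, 18, 19, 20, 21, 22, 23], by decide, by decide⟩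

lemma ms0000 : cs0000 ∈ S :=
  ⟨0, 0, 0, 0, by decide, by decide, by decide⟩

def cs0001 : Equiv.Perm (Fin 24) :=
  ⟨![0, 1, 2, 3, 4, 5, 9, 10, 11, 17, 16, 15, 8, 7, 6, 13, 14, 23, 18, 19, 20, 12, 21, 22], ![0, 1, 2, 3, 4, 5, 14, 13, 12, 6, 7, 8, 21, 15, 16, 11, 10, 9, 18, 19, 20, 22, 23, 17], by decide, by decide⟩

lemma ms0001 : cs0001 ∈ S :=
  ⟨0, 0, 0, 1, by decide, by decide, by decide⟩

def cs0005 : Equiv.Perm (Fin 24) :=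
  ⟨![0, 1, 2, 3, 4, 5, 9, 10, 11, 17, 16, 15, 8, 7, 6, 21, 12, 13, 18, 19, 20, 22, 23, 14], ![0, 1, 2, 3, 4, 5, 14, 13, 12, 6, 7, 8, 16, 17, 23, 11, 10, 9, 18, 19, 20, 15, 21, 22], by decide, by decide⟩

lemma ms0005 : cs0005 ∈ S :=
  ⟨0, 0, 0, 5, by decide, by decide, by decide⟩

def cs0010 : Equiv.Perm (Fin 24) :=
  ⟨![0, 1, 2, 4, 5, 15, 9, 10, 11, 3, 17, 16, 8, 7, 6, 12, 13, 14, 18, 19, 20, 21, 22, 23], ![0, 1, 2, 9, 3, 4, 14, 13, 12, 6, 7, 8, 15, 16, 17, 5, 11, 10, 18, 19, 20, 21, 22, 23], by decide, by decide⟩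

lemma ms0010 : cs0010 ∈ S :=
  ⟨0, 0, 1, 0, by decide, by decide, by decide⟩

def cs0011 : Equiv.Perm (Fin 24) :=
  ⟨![0, 1, 2, 4, 5, 15, 9, 10, 11, 3, 17, 16, 8, 7, 6, 13, 14, 23, 18, 19, 20, 12, 21, 22], ![0, 1, 2, 9, 3, 4, 14, 13, 12, 6, 7, 8, 21, 15, 16, 5, 11, 10, 18, 19, 20, 22, 23, 17], by decide, by decide⟩

lemma ms0011 : cs0011 ∈ S :=
  ⟨0, 0, 1, 1, by decide, by decide, by decide⟩

def cs0023 : Equiv.Perm (Fin 24) :=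
  ⟨![0, 1, 2, 5, 15, 16, 9, 10, 11, 4, 3, 17, 8, 7, 6, 23, 22, 21, 18, 19, 20, 14, 13, 12], ![0, 1, 2, 10, 9, 3, 14, 13, 12, 6, 7, 8, 23, 22, 21, 4, 5, 11, 18, 19, 20, 17, 16, 15], by decide, by decide⟩

lemma ms0023 : cs0023 ∈ S :=
  ⟨0, 0, 2, 3, by decide, by decide, by decide⟩

def cs0032 : Equiv.Perm (Fin 24) :=
  ⟨![0, 1, 2, 15, 16, 17, 9, 10, 11, 5, 4, 3, 8, 7, 6, 14, 23, 22, 18, 19, 20, 13, 12, 21], ![0, 1, 2, 11, 10, 9, 14, 13, 12, 6, 7, 8, 22, 21, 15, 3, 4, 5, 18, 19, 20, 23, 17, 16], by decide, by decide⟩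

lemma ms0032 : cs0032 ∈ S :=
  ⟨0, 0, 3, 2, by decide, by decide, by decide⟩

def cs0033 : Equiv.Perm (Fin 24) :=
  ⟨![0, 1, 2, 15, 16, 17, 9, 10, 11, 5, 4, 3, 8, 7, 6, 23, 22, 21, 18, 19, 20, 14, 13, 12], ![0, 1, 2, 11, 10, 9, 14, 13, 12, 6, 7, 8, 23, 22, 21, 3, 4, 5, 18, 19, 20, 17, 16, 15], by decide, by decide⟩

lemma ms0033 : cs0033 ∈ S :=
  ⟨0, 0, 3, 3, by decide, by decide, by decide⟩

def cs0043 : Equiv.Perm (Fin 24) :=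
  ⟨![0, 1, 2, 16, 17, 3, 9, 10, 11, 15, 5, 4, 8, 7, 6, 23, 22, 21, 18, 19, 20, 14, 13, 12], ![0, 1, 2, 5, 11, 10, 14, 13, 12, 6, 7, 8, 23, 22, 21, 9, 3, 4, 18, 19, 20, 17, 16, 15], by decide, by decide⟩

lemma ms0043 : cs0043 ∈ S :=
  ⟨0, 0, 4, 3, by decide, by decide, by decide⟩

def cs0055 : Equiv.Perm (Fin 24) :=
  ⟨![0, 1, 2, 17, 3, 4, 9, 10, 11, 16, 15, 5, 8, 7, 6, 21, 12, 13, 18, 19, 20, 22, 23, 14], ![0, 1, 2, 4, 5, 11, 14, 13, 12, 6, 7, 8, 16, 17, 23, 10, 9, 3, 18, 19, 20, 15, 21, 22], by decide, by decide⟩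

lemma ms0055 : cs0055 ∈ S :=
  ⟨0, 0, 5, 5, by decide, by decide, by decide⟩

def cs0100 : Equiv.Perm (Fin 24) :=
  ⟨![0, 1, 2, 3, 4, 5, 9, 10, 11, 17, 16, 15, 7, 6, 20, 12, 13, 14, 8, 18, 19, 21, 22, 23], ![0, 1, 2, 3, 4, 5, 13, 12, 18, 6, 7, 8, 15, 16, 17, 11, 10, 9, 19, 20, 14, 21, 22, 23], by decide, by decide⟩

lemma ms0100 : cs0100 ∈ S :=
  ⟨0, 1, 0, 0, by decide, by decide, by decide⟩

def cs0101 : Equiv.Perm (Fin 24) :=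
  ⟨![0, 1, 2, 3, 4, 5, 9, 10, 11, 17, 16, 15, 7, 6, 20, 13, 14, 23, 8, 18, 19, 12, 21, 22], ![0, 1, 2, 3, 4, 5, 13, 12, 18, 6, 7, 8, 21, 15, 16, 11, 10, 9, 19, 20, 14, 22, 23, 17], by decide, by decide⟩

lemma ms0101 : cs0101 ∈ S :=
  ⟨0, 1, 0, 1, by decide, by decide, by decide⟩

def cs0105 : Equiv.Perm (Fin 24) :=
  ⟨![0, 1, 2, 3, 4, 5, 9, 10, 11, 17, 16, 15, 7, 6, 20, 21, 12, 13, 8, 18, 19, 22, 23, 14], ![0, 1, 2, 3, 4, 5, 13, 12, 18, 6, 7, 8, 16, 17, 23, 11, 10, 9, 19, 20, 14, 15, 21, 22], by decide, by decide⟩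

lemma ms0105 : cs0105 ∈ S :=
  ⟨0, 1, 0, 5, by decide, by decide, by decide⟩

def cs0110 : Equiv.Perm (Fin 24) :=
  ⟨![0, 1, 2, 4, 5, 15, 9, 10, 11, 3, 17, 16, 7, 6, 20, 12, 13, 14, 8, 18, 19, 21, 22, 23], ![0, 1, 2, 9, 3, 4, 13, 12, 18, 6, 7, 8, 15, 16, 17, 5, 11, 10, 19, 20, 14, 21, 22, 23], by decide, by decide⟩

lemma ms0110 : cs0110 ∈ S :=
  ⟨0, 1, 1, 0, by decide, by decide, by decide⟩

def cs0133 : Equiv.Perm (Fin 24) :=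
  ⟨![0, 1, 2, 15, 16, 17, 9, 10, 11, 5, 4, 3, 7, 6, 20, 23, 22, 21, 8, 18, 19, 14, 13, 12], ![0, 1, 2, 11, 10, 9, 13, 12, 18, 6, 7, 8, 23, 22, 21, 3, 4, 5, 19, 20, 14, 17, 16, 15], by decide, by decide⟩

lemma ms0133 : cs0133 ∈ S :=
  ⟨0, 1, 3, 3, by decide, by decide, by decide⟩

def cs0500 : Equiv.Perm (Fin 24) :=
  ⟨![0, 1, 2, 3, 4, 5, 9, 10, 11, 17, 16, 15, 18, 8, 7, 12, 13, 14, 19, 20, 6, 21, 22, 23], ![0, 1, 2, 3, 4, 5, 20, 14, 13, 6, 7, 8, 15, 16, 17, 11, 10, 9, 12, 18, 19, 21, 22, 23], by decide, by decide⟩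

lemma ms0500 : cs0500 ∈ S :=
  ⟨0, 5, 0, 0, by decide, by decide, by decide⟩

def cs0501 : Equiv.Perm (Fin 24) :=
  ⟨![0, 1, 2, 3, 4, 5, 9, 10, 11, 17, 16, 15, 18, 8, 7, 13, 14, 23, 19, 20, 6, 12, 21, 22], ![0, 1, 2, 3, 4, 5, 20, 14, 13, 6, 7, 8, 21, 15, 16, 11, 10, 9, 12, 18, 19, 22, 23, 17], by decide, by decide⟩

lemma ms0501 : cs0501 ∈ S :=
  ⟨0, 5, 0, 1, by decide, by decide, by decide⟩

def cs0505 : Equiv.Perm (Fin 24) :=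
  ⟨![0, 1, 2, 3, 4, 5, 9, 10, 11, 17, 16, 15, 18, 8, 7, 21, 12, 13, 19, 20, 6, 22, 23, 14], ![0, 1, 2, 3, 4, 5, 20, 14, 13, 6, 7, 8, 16, 17, 23, 11, 10, 9, 12, 18, 19, 15, 21, 22], by decide, by decide⟩

lemma ms0505 : cs0505 ∈ S :=
  ⟨0, 5, 0, 5, by decide, by decide, by decide⟩

def cs0522 : Equiv.Perm (Fin 24) :=
  ⟨![0, 1, 2, 5, 15, 16, 9, 10, 11, 4, 3, 17, 18, 8, 7, 14, 23, 22, 19, 20, 6, 13, 12, 21], ![0, 1, 2, 10, 9, 3, 20, 14, 13, 6, 7, 8, 22, 21, 15, 4, 5, 11, 12, 18, 19, 23, 17, 16], by decide, by decide⟩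

lemma ms0522 : cs0522 ∈ S :=
  ⟨0, 5, 2, 2, by decide, by decide, by decide⟩

def cs1021 : Equiv.Perm (Fin 24) :=
  ⟨![1, 2, 11, 5, 15, 16, 0, 9, 10, 4, 3, 17, 8, 7, 6, 13, 14, 23, 18, 19, 20, 12, 21, 22], ![6, 0, 1, 10, 9, 3, 14, 13, 12, 7, 8, 2, 21, 15, 16, 4, 5, 11, 18, 19, 20, 22, 23, 17], by decide, by decide⟩

lemma ms1021 : cs1021 ∈ S :=
  ⟨1, 0, 2, 1, by decide, by decide, by decide⟩

def cs1150 : Equiv.Perm (Fin 24) :=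
  ⟨![1, 2, 11, 17, 3, 4, 0, 9, 10, 16, 15, 5, 7, 6, 20, 12, 13, 14, 8, 18, 19, 21, 22, 23], ![6, 0, 1, 4, 5, 11, 13, 12, 18, 7, 8, 2, 15, 16, 17, 10, 9, 3, 19, 20, 14, 21, 22, 23], by decide, by decide⟩

lemma ms1150 : cs1150 ∈ S :=
  ⟨1, 1, 5, 0, by decide, by decide, by decide⟩

def cs4500 : Equiv.Perm (Fin 24) :=
  ⟨![10, 9, 0, 3, 4, 5, 11, 2, 1, 17, 16, 15, 18, 8, 7, 12, 13, 14, 19, 20, 6, 21, 22, 23], ![2, 8, 7, 3, 4, 5, 20, 14, 13, 1, 0, 6, 15, 16, 17, 11, 10, 9, 12, 18, 19, 21, 22, 23], by decide, by decide⟩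

lemma ms4500 : cs4500 ∈ S :=
  ⟨4, 5, 0, 0, by decide, by decide, by decide⟩

def cs5005 : Equiv.Perm (Fin 24) :=
  ⟨![9, 0, 1, 3, 4, 5, 10, 11, 2, 17, 16, 15, 8, 7, 6, 21, 12, 13, 18, 19, 20, 22, 23, 14], ![1, 2, 8, 3, 4, 5, 14, 13, 12, 0, 6, 7, 16, 17, 23, 11, 10, 9, 18, 19, 20, 15, 21, 22], by decide, by decide⟩

lemma ms5005 : cs5005 ∈ S :=
  ⟨5, 0, 0, 5, by decide, by decide, by decide⟩

def cs5010 : Equiv.Perm (Fin 24) :=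
  ⟨![9, 0, 1, 4, 5, 15, 10, 11, 2, 3, 17, 16, 8, 7, 6, 12, 13, 14, 18, 19, 20, 21, 22, 23], ![1, 2, 8, 9, 3, 4, 14, 13, 12, 0, 6, 7, 15, 16, 17, 5, 11, 10, 18, 19, 20, 21, 22, 23], by decide, by decide⟩

lemma ms5010 : cs5010 ∈ S :=
  ⟨5, 0, 1, 0, by decide, by decide, by decide⟩

def cs5022 : Equiv.Perm (Fin 24) :=
  ⟨![9, 0, 1, 5, 15, 16, 10, 11, 2, 4, 3, 17, 8, 7, 6, 14, 23, 22, 18, 19, 20, 13, 12, 21], ![1, 2, 8, 10, 9, 3, 14, 13, 12, 0, 6, 7, 22, 21, 15, 4, 5, 11, 18, 19, 20, 23, 17, 16], by decide, by decide⟩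

lemma ms5022 : cs5022 ∈ S :=
  ⟨5, 0, 2, 2, by decide, by decide, by decide⟩

def cs5405 : Equiv.Perm (Fin 24) :=
  ⟨![9, 0, 1, 3, 4, 5, 10, 11, 2, 17, 16, 15, 19, 18, 8, 21, 12, 13, 20, 6, 7, 22, 23, 14], ![1, 2, 8, 3, 4, 5, 19, 20, 14, 0, 6, 7, 16, 17, 23, 11, 10, 9, 13, 12, 18, 15, 21, 22], by decide, by decide⟩

lemma ms5405 : cs5405 ∈ S :=
  ⟨5, 4, 0, 5, by decide, by decide, by decide⟩

def cs5445 : Equiv.Perm (Fin 24) :=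
  ⟨![9, 0, 1, 16, 17, 3, 10, 11, 2, 15, 5, 4, 19, 18, 8, 21, 12, 13, 20, 6, 7, 22, 23, 14], ![1, 2, 8, 5, 11, 10, 19, 20, 14, 0, 6, 7, 16, 17, 23, 9, 3, 4, 13, 12, 18, 15, 21, 22], by decide, by decide⟩

lemma ms5445 : cs5445 ∈ S :=
  ⟨5, 4, 4, 5, by decide, by decide, by decide⟩

def cs5505 : Equiv.Perm (Fin 24) :=
  ⟨![9, 0, 1, 3, 4, 5, 10, 11, 2, 17, 16, 15, 18, 8, 7, 21, 12, 13, 19, 20, 6, 22, 23, 14], ![1, 2, 8, 3, 4, 5, 20, 14, 13, 0, 6, 7, 16, 17, 23, 11, 10, 9, 12, 18, 19, 15, 21, 22], by decide, by decide⟩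

lemma ms5505 : cs5505 ∈ S :=
  ⟨5, 5, 0, 5, by decide, by decide, by decide⟩

def B0 : List (Equiv.Perm (Fin 24)) := [cs0500, cs0500, cs0500, cs0033, cs0500, cs0500, cs0500, cs0033, cs0500, cs0500, cs0500, cs0043, cs0500, cs0500, cs0500, cs0033, cs0500, cs0500, cs0500, cs0043]

def d0 : Equiv.Perm (Fin 24) :=
  ⟨![0, 1, 2, 15, 16, 17, 6, 7, 8, 10, 11, 18, 13, 14, 20, 19, 3, 4, 9, 5, 23, 12, 21, 22], ![0, 1, 2, 16, 17, 19, 6, 7, 8, 18, 9, 10, 21, 12, 13, 3, 4, 5, 11, 15, 14, 22, 23, 20], by decide, by decide⟩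

lemma hB0 : (B0).reverse.prod = d0 := by decide

def B1 : List (Equiv.Perm (Fin 24)) := [cs0500, cs0500, cs0500, cs0001, cs0000, cs0000, cs0000, cs0001, cs0000, cs0000, cs0000, cs0500, cs0500, cs0500, cs0500, cs0500, cs0500, cs0500, cs0500, cs0500]

def d1 : Equiv.Perm (Fin 24) :=
  ⟨![0, 1, 2, 3, 4, 5, 18, 9, 10, 19, 17, 16, 8, 12, 23, 13, 14, 20, 11, 15, 22, 6, 7, 21], ![0, 1, 2, 3, 4, 5, 21, 22, 12, 7, 8, 18, 13, 15, 16, 19, 11, 10, 6, 9, 17, 23, 20, 14], by decide, by decide⟩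

lemma hB1 : (B1).reverse.prod = d1 := by decide

def B2 : List (Equiv.Perm (Fin 24)) := [cs0500, cs0500, cs0500, cs0033, cs0033, cs0033, cs0033, cs0133, cs0000, cs0133, cs0133, cs0133, cs0033, cs0033, cs0033, cs0000, cs0000, cs0000, cs0011, cs5005]

def d2 : Equiv.Perm (Fin 24) :=
  ⟨![9, 0, 1, 13, 3, 20, 19, 8, 22, 11, 2, 15, 23, 4, 5, 7, 16, 17, 10, 12, 21, 18, 14, 6], ![1, 2, 10, 4, 13, 14, 23, 15, 7, 0, 18, 9, 19, 3, 22, 11, 16, 17, 21, 6, 5, 20, 8, 12], by decide, by decide⟩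

lemma hB2 : (B2).reverse.prod = d2 := by decide

def B3 : List (Equiv.Perm (Fin 24)) := [cs5005, cs5005, cs5505, cs5505, cs5505, cs5505, cs5405, cs5405, cs5405, cs5505, cs5505, cs5505, cs0005, cs0000, cs0000, cs0000, cs0005, cs0000, cs0000, cs0000]

def d3 : Equiv.Perm (Fin 24) :=
  ⟨![2, 8, 13, 3, 4, 5, 16, 15, 23, 1, 20, 14, 21, 9, 19, 7, 6, 0, 10, 12, 18, 11, 22, 17], ![17, 9, 0, 3, 4, 5, 16, 15, 1, 13, 18, 21, 19, 2, 11, 7, 6, 23, 20, 14, 10, 12, 22, 8], by decide, by decide⟩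

lemma hB3 : (B3).reverse.prod = d3 := by decide

def B4 : List (Equiv.Perm (Fin 24)) := [cs0501, cs0000, cs0000, cs0000, cs0033, cs0000, cs0000, cs0000, cs5022, cs0100, cs0005, cs0105, cs0105, cs0105, cs0105, cs0105, cs0105, cs0105, cs0105, cs0105]

def d4 : Equiv.Perm (Fin 24) :=
  ⟨![6, 0, 1, 9, 3, 4, 7, 15, 2, 10, 18, 5, 8, 11, 12, 16, 17, 14, 19, 20, 13, 21, 22, 23], ![1, 2, 8, 4, 5, 11, 0, 6, 12, 3, 9, 13, 14, 20, 17, 7, 15, 16, 10, 18, 19, 21, 22, 23], by decide, by decide⟩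

lemma hB4 : (B4).reverse.prod = d4 := by decide

def B5 : List (Equiv.Perm (Fin 24)) := [cs0105, cs0105, cs0105, cs0105, cs0105, cs0105, cs0105, cs0105, cs0105, cs0033, cs0033, cs0033, cs0133, cs0133, cs0133, cs0133, cs0133, cs0133, cs0133, cs0133]

def d5 : Equiv.Perm (Fin 24) :=
  ⟨![0, 1, 2, 9, 19, 23, 15, 20, 10, 18, 5, 13, 14, 3, 16, 6, 22, 21, 7, 12, 11, 4, 8, 17], ![0, 1, 2, 13, 21, 10, 15, 18, 22, 3, 8, 20, 19, 11, 12, 6, 14, 23, 9, 4, 7, 17, 16, 5], by decide, by decide⟩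

lemma hB5 : (B5).reverse.prod = d5 := by decide

def B6 : List (Equiv.Perm (Fin 24)) := [cs0133, cs0133, cs0133, cs0133, cs0133, cs0133, cs0133, cs0133, cs0133, cs0133, cs0000, cs0000, cs0500, cs0500, cs0500, cs0500, cs0500, cs0500, cs0500, cs0500]

def d6 : Equiv.Perm (Fin 24) :=
  ⟨![0, 1, 2, 15, 13, 9, 7, 21, 22, 3, 11, 19, 8, 14, 20, 12, 16, 23, 18, 4, 6, 17, 10, 5], ![0, 1, 2, 9, 19, 23, 20, 6, 12, 5, 22, 10, 15, 4, 13, 3, 16, 21, 18, 11, 14, 7, 8, 17], by decide, by decide⟩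

lemma hB6 : (B6).reverse.prod = d6 := by decide

def B7 : List (Equiv.Perm (Fin 24)) := [cs0500, cs0500, cs0500, cs0500, cs0500, cs0001, cs0000, cs0000, cs0000, cs0133, cs0100, cs0100, cs0100, cs0105, cs0100, cs0100, cs0100, cs0100, cs0100, cs0100]

def d7 : Equiv.Perm (Fin 24) :=
  ⟨![0, 1, 2, 20, 11, 10, 4, 3, 21, 22, 23, 6, 5, 17, 14, 7, 18, 12, 9, 13, 8, 15, 16, 19], ![0, 1, 2, 7, 6, 12, 11, 15, 20, 18, 5, 4, 17, 19, 14, 21, 22, 13, 16, 23, 3, 8, 9, 10], by decide, by decide⟩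

lemma hB7 : (B7).reverse.prod = d7 := by decide

def B8 : List (Equiv.Perm (Fin 24)) := [cs0100, cs0100, cs0100, cs0100, cs0005, cs0000, cs0000, cs0000, cs0133, cs0505, cs0105, cs0105, cs0105, cs0105, cs0105, cs0105, cs0105, cs0105, cs0105, cs0105]

def d8 : Equiv.Perm (Fin 24) :=
  ⟨![0, 1, 2, 21, 10, 9, 20, 6, 7, 19, 5, 4, 13, 17, 15, 14, 23, 11, 12, 16, 3, 8, 18, 22], ![0, 1, 2, 20, 11, 10, 7, 8, 21, 5, 4, 17, 18, 12, 15, 14, 19, 13, 22, 9, 6, 3, 23, 16], by decide, by decide⟩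

lemma hB8 : (B8).reverse.prod = d8 := by decide

def B9 : List (Equiv.Perm (Fin 24)) := [cs0105, cs0105, cs0105, cs0105, cs0105, cs0105, cs0105, cs0105, cs0133, cs0133, cs0133, cs0033, cs0033, cs0033, cs0500, cs0500, cs0000, cs0000, cs0005, cs0000]

def d9 : Equiv.Perm (Fin 24) :=
  ⟨![0, 1, 2, 3, 4, 5, 17, 16, 6, 14, 13, 19, 11, 10, 22, 15, 8, 9, 18, 20, 23, 12, 21, 7], ![0, 1, 2, 3, 4, 5, 8, 23, 16, 17, 13, 12, 21, 10, 9, 15, 7, 6, 18, 11, 19, 22, 14, 20], by decide, by decide⟩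

lemma hB9 : (B9).reverse.prod = d9 := by decide

def B10 : List (Equiv.Perm (Fin 24)) := [cs0000, cs0000, cs0005, cs0000, cs0000, cs0000, cs0500, cs0500, cs0000, cs0000, cs0500, cs0500, cs0500, cs0000, cs0100, cs0100, cs0100, cs0005, cs0005, cs0000]

def d10 : Equiv.Perm (Fin 24) :=
  ⟨![0, 1, 2, 3, 4, 5, 21, 20, 23, 11, 12, 19, 22, 13, 14, 15, 16, 17, 18, 7, 10, 6, 9, 8], ![0, 1, 2, 3, 4, 5, 21, 19, 23, 22, 20, 9, 10, 13, 14, 15, 16, 17, 18, 11, 7, 6, 12, 8], by decide, by decide⟩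

lemma hB10 : (B10).reverse.prod = d10 := by decide

def B11 : List (Equiv.Perm (Fin 24)) := [cs0000, cs0000, cs0500, cs0500, cs0500, cs0000, cs0500, cs0500, cs0500, cs0000, cs0101, cs0101, cs0000, cs0000, cs0101, cs0101, cs0000, cs0000, cs0100, cs0100]

def d11 : Equiv.Perm (Fin 24) :=
  ⟨![0, 1, 2, 3, 4, 5, 22, 20, 12, 19, 10, 7, 21, 9, 14, 15, 16, 17, 23, 11, 8, 18, 13, 6], ![0, 1, 2, 3, 4, 5, 23, 11, 20, 13, 10, 19, 8, 22, 14, 15, 16, 17, 21, 9, 7, 12, 6, 18], by decide, by decide⟩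

lemma hB11 : (B11).reverse.prod = d11 := by decide

def B12 : List (Equiv.Perm (Fin 24)) := [cs0100, cs0005, cs0133, cs0133, cs0133, cs0033, cs0033, cs0033, cs0500, cs0500, cs0500, cs0043, cs0500, cs0500, cs0500, cs0033, cs0101, cs0101, cs0000, cs0000]

def d12 : Equiv.Perm (Fin 24) :=
  ⟨![0, 1, 2, 3, 4, 17, 19, 22, 20, 14, 13, 15, 12, 10, 5, 8, 7, 6, 23, 16, 18, 11, 21, 9], ![0, 1, 2, 3, 4, 14, 17, 16, 15, 23, 13, 21, 12, 10, 9, 11, 19, 5, 20, 6, 8, 22, 7, 18], by decide, by decide⟩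

lemma hB12 : (B12).reverse.prod = d12 := by decide

def B13 : List (Equiv.Perm (Fin 24)) := [cs0032, cs0032, cs0032, cs0010, cs0010, cs0101, cs0101, cs0000, cs0000, cs0500, cs0500, cs0500, cs0033, cs0522, cs0522, cs0522, cs0522, cs0055, cs0110, cs0110]

def d13 : Equiv.Perm (Fin 24) :=
  ⟨![0, 1, 2, 20, 22, 11, 3, 10, 16, 6, 15, 4, 8, 7, 12, 13, 19, 9, 21, 5, 14, 17, 18, 23], ![0, 1, 2, 6, 11, 19, 9, 13, 12, 17, 7, 5, 14, 15, 20, 10, 8, 21, 22, 16, 3, 18, 4, 23], by decide, by decide⟩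

lemma hB13 : (B13).reverse.prod = d13 := by decide

def B14 : List (Equiv.Perm (Fin 24)) := [cs0110, cs0501, cs1021, cs0001, cs0001, cs5445, cs1150, cs1150, cs5010, cs5010, cs0023, cs0023, cs4500, cs4500, cs4500, cs4500, cs0000, cs0000, cs0000, cs0000]

def d14 : Equiv.Perm (Fin 24) :=
  ⟨![8, 1, 2, 6, 13, 23, 16, 17, 22, 5, 7, 9, 10, 12, 21, 11, 0, 15, 14, 20, 3, 18, 4, 19], ![16, 1, 2, 20, 22, 9, 3, 10, 0, 11, 12, 15, 13, 4, 18, 17, 6, 7, 21, 23, 19, 14, 8, 5], by decide, by decide⟩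

lemma hB14 : (B14).reverse.prod = d14 := by decide

def B15 : List (Equiv.Perm (Fin 24)) := [cs0000, cs0000, cs0000, cs0000, cs0000, cs0000, cs0000, cs0000, cs0000, cs0000, cs0000, cs0000, cs0000, cs0000, cs0000, cs0000, cs0000, cs0000, cs0000, cs0000]

def d15 : Equiv.Perm (Fin 24) :=
  ⟨![0, 1, 2, 3, 4, 5, 6, 7, 8, 9, 10, 11, 12, 13, 14, 15, 16, 17, 18, 19, 20, 21, 22, 23], ![0, 1, 2, 3, 4, 5, 6, 7, 8, 9, 10, 11, 12, 13, 14, 15, 16, 17, 18, 19, 20, 21, 22, 23], by decide, by decide⟩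

lemma hB15 : (B15).reverse.prod = d15 := by decide

def B16 : List (Equiv.Perm (Fin 24)) := [cs0000, cs0000, cs0000, cs0000, cs0000, cs0000, cs0000, cs0000, cs0000, cs0000, cs0000, cs0000, cs0000, cs0000, cs0000, cs0000, cs0000, cs0000, cs0000, cs0000]

def d16 : Equiv.Perm (Fin 24) :=
  ⟨![0, 1, 2, 3, 4, 5, 6, 7, 8, 9, 10, 11, 12, 13, 14, 15, 16, 17, 18, 19, 20, 21, 22, 23], ![0, 1, 2, 3, 4, 5, 6, 7, 8, 9, 10, 11, 12, 13, 14, 15, 16, 17, 18, 19, 20, 21, 22, 23], by decide, by decide⟩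

lemma hB16 : (B16).reverse.prod = d16 := by decide

def L : List (Equiv.Perm (Fin 24)) := B0 ++ B1 ++ B2 ++ B3 ++ B4 ++ B5 ++ B6 ++ B7 ++ B8 ++ B9 ++ B10 ++ B11 ++ B12 ++ B13 ++ B14 ++ B15 ++ B16

lemma hlen : L.length = 340 := by decide

lemma hmB0 : ∀ g ∈ B0, g ∈ S := by
  intro g hg
  fin_cases hg
  exacts [ms0500, ms0500, ms0500, ms0033, ms0500, ms0500, ms0500, ms0033, ms0500, ms0500, ms0500, ms0043, ms0500, ms0500, ms0500, ms0033, ms0500, ms0500, ms0500, ms0043]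

lemma hmB1 : ∀ g ∈ B1, g ∈ S := by
  intro g hg
  fin_cases hg
  exacts [ms0500, ms0500, ms0500, ms0001, ms0000, ms0000, ms0000, ms0001, ms0000, ms0000, ms0000, ms0500, ms0500, ms0500, ms0500, ms0500, ms0500, ms0500, ms0500, ms0500]

lemma hmB2 : ∀ g ∈ B2, g ∈ S := by
  intro g hg
  fin_cases hg
  exacts [ms0500, ms0500, ms0500, ms0033, ms0033, ms0033, ms0033, ms0133, ms0000, ms0133, ms0133, ms0133, ms0033, ms0033, ms0033, ms0000, ms0000, ms0000, ms0011, ms5005]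

lemma hmB3 : ∀ g ∈ B3, g ∈ S := by
  intro g hg
  fin_cases hg
  exacts [ms5005, ms5005, ms5505, ms5505, ms5505, ms5505, ms5405, ms5405, ms5405, ms5505, ms5505, ms5505, ms0005, ms0000, ms0000, ms0000, ms0005, ms0000, ms0000, ms0000]

lemma hmB4 : ∀ g ∈ B4, g ∈ S := by
  intro g hg
  fin_cases hg
  exacts [ms0501, ms0000, ms0000, ms0000, ms0033, ms0000, ms0000, ms0000, ms5022, ms0100, ms0005, ms0105, ms0105, ms0105, ms0105, ms0105, ms0105, ms0105, ms0105, ms0105]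

lemma hmB5 : ∀ g ∈ B5, g ∈ S := by
  intro g hg
  fin_cases hg
  exacts [ms0105, ms0105, ms0105, ms0105, ms0105, ms0105, ms0105, ms0105, ms0105, ms0033, ms0033, ms0033, ms0133, ms0133, ms0133, ms0133, ms0133, ms0133, ms0133, ms0133]

lemma hmB6 : ∀ g ∈ B6, g ∈ S := by
  intro g hg
  fin_cases hg
  exacts [ms0133, ms0133, ms0133, ms0133, ms0133, ms0133, ms0133, ms0133, ms0133, ms0133, ms0000, ms0000, ms0500, ms0500, ms0500, ms0500, ms0500, ms0500, ms0500, ms0500]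

lemma hmB7 : ∀ g ∈ B7, g ∈ S := by
  intro g hg
  fin_cases hg
  exacts [ms0500, ms0500, ms0500, ms0500, ms0500, ms0001, ms0000, ms0000, ms0000, ms0133, ms0100, ms0100, ms0100, ms0105, ms0100, ms0100, ms0100, ms0100, ms0100, ms0100]

lemma hmB8 : ∀ g ∈ B8, g ∈ S := by
  intro g hg
  fin_cases hg
  exacts [ms0100, ms0100, ms0100, ms0100, ms0005, ms0000, ms0000, ms0000, ms0133, ms0505, ms0105, ms0105, ms0105, ms0105, ms0105, ms0105, ms0105, ms0105, ms0105, ms0105]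

lemma hmB9 : ∀ g ∈ B9, g ∈ S := by
  intro g hg
  fin_cases hg
  exacts [ms0105, ms0105, ms0105, ms0105, ms0105, ms0105, ms0105, ms0105, ms0133, ms0133, ms0133, ms0033, ms0033, ms0033, ms0500, ms0500, ms0000, ms0000, ms0005, ms0000]

lemma hmB10 : ∀ g ∈ B10, g ∈ S := by
  intro g hg
  fin_cases hg
  exacts [ms0000, ms0000, ms0005, ms0000, ms0000, ms0000, ms0500, ms0500, ms0000, ms0000, ms0500, ms0500, ms0500, ms0000, ms0100, ms0100, ms0100, ms0005, ms0005, ms0000]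

lemma hmB11 : ∀ g ∈ B11, g ∈ S := by
  intro g hg
  fin_cases hg
  exacts [ms0000, ms0000, ms0500, ms0500, ms0500, ms0000, ms0500, ms0500, ms0500, ms0000, ms0101, ms0101, ms0000, ms0000, ms0101, ms0101, ms0000, ms0000, ms0100, ms0100]

lemma hmB12 : ∀ g ∈ B12, g ∈ S := by
  intro g hg
  fin_cases hg
  exacts [ms0100, ms0005, ms0133, ms0133, ms0133, ms0033, ms0033, ms0033, ms0500, ms0500, ms0500, ms0043, ms0500, ms0500, ms0500, ms0033, ms0101, ms0101, ms0000, ms0000]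

lemma hmB13 : ∀ g ∈ B13, g ∈ S := by
  intro g hg
  fin_cases hg
  exacts [ms0032, ms0032, ms0032, ms0010, ms0010, ms0101, ms0101, ms0000, ms0000, ms0500, ms0500, ms0500, ms0033, ms0522, ms0522, ms0522, ms0522, ms0055, ms0110, ms0110]

lemma hmB14 : ∀ g ∈ B14, g ∈ S := by
  intro g hg
  fin_cases hg
  exacts [ms0110, ms0501, ms1021, ms0001, ms0001, ms5445, ms1150, ms1150, ms5010, ms5010, ms0023, ms0023, ms4500, ms4500, ms4500, ms4500, ms0000, ms0000, ms0000, ms0000]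

lemma hmB15 : ∀ g ∈ B15, g ∈ S := by
  intro g hg
  fin_cases hg
  exacts [ms0000, ms0000, ms0000, ms0000, ms0000, ms0000, ms0000, ms0000, ms0000, ms0000, ms0000, ms0000, ms0000, ms0000, ms0000, ms0000, ms0000, ms0000, ms0000, ms0000]

lemma hmB16 : ∀ g ∈ B16, g ∈ S := by
  intro g hg
  fin_cases hg
  exacts [ms0000, ms0000, ms0000, ms0000, ms0000, ms0000, ms0000, ms0000, ms0000, ms0000, ms0000, ms0000, ms0000, ms0000, ms0000, ms0000, ms0000, ms0000, ms0000, ms0000]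

lemma faS {l₁ l₂ : List (Equiv.Perm (Fin 24))}
    (h₁ : ∀ g ∈ l₁, g ∈ S) (h₂ : ∀ g ∈ l₂, g ∈ S) : ∀ g ∈ l₁ ++ l₂, g ∈ S := by
  intro g hg
  rcases List.mem_append.1 hg with h | h
  exacts [h₁ g h, h₂ g h]

lemma hmem : ∀ g ∈ L, g ∈ S := by
  unfold L
  exact (faS (faS (faS (faS (faS (faS (faS (faS (faS (faS (faS (faS (faS (faS (faS (faS hmB0 hmB1) hmB2) hmB3) hmB4) hmB5) hmB6) hmB7) hmB8) hmB9) hmB10) hmB11) hmB12) hmB13) hmB14) hmB15) hmB16)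

lemma hprod : L.reverse.prod = Equiv.swap (0 : Fin 24) 8 := by
  simp only [L, List.reverse_append, List.prod_append, hB0, hB1, hB2, hB3, hB4, hB5, hB6, hB7, hB8, hB9, hB10, hB11, hB12, hB13, hB14, hB15, hB16]
  decide

/-- The transposition sequence H: a 340-step word in S realizing the swap (0 8). -/
theorem swap08_realizable :
    (∃ l : List (Equiv.Perm (Fin 24)),
      (∀ g ∈ l, g ∈ S) ∧ l.length = 340 ∧ l.reverse.prod = Equiv.swap (0 : Fin 24) 8) ∧
    Equiv.swap (0 : Fin 24) 8 ∈ Submonoid.closure S := by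
  refine ⟨⟨L, hmem, hlen, hprod⟩, ?_⟩
  rw [← hprod]
  exact Submonoid.list_prod_mem _ (fun g hg => Submonoid.subset_closure (hmem g (List.mem_reverse.1 hg)))

end Volleyball
end

section
/- Any rearrangement of the players within quadrant A is realizable by the chain: every permutation σ ∈ Equiv.Perm (Fin 24) that fixes every position outside {0,1,2,6,7,8} belongs to Submonoid.closure S. -/
set_option maxRecDepth 8000


namespace Volleyball

/-- The subgroup generated (as a monoid, which suffices in a finite group) by `S`. -/
def G : Subgroup (Equiv.Perm (Fin 24)) where
  carrier := Submonoid.closure S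
  mul_mem' := fun ha hb => (Submonoid.closure S).mul_mem ha hb
  one_mem' := (Submonoid.closure S).one_mem
  inv_mem' := by
    intro x hx
    have hpos : 0 < orderOf x := orderOf_pos x
    have h1 : x ^ (orderOf x - 1) * x = 1 := by
      rw [← pow_succ, Nat.sub_add_cancel hpos, pow_orderOf_eq_one]
    have h2 : x ^ (orderOf x - 1) = x⁻¹ := eq_inv_of_mul_eq_one_left h1
    exact h2 ▸ (Submonoid.closure S).pow_mem hx _

lemma mem_G_iff (x : Equiv.Perm (Fin 24)) : x ∈ G ↔ x ∈ Submonoid.closure S := Iff.rfl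

lemma hE : E ∈ G := by
  apply Submonoid.subset_closure
  refine ⟨0, 0, 0, 0, Or.inr (Or.inl (by decide)), Or.inr (Or.inl (by decide)), ?_⟩
  simp

lemma hrA : rA ∈ G := by
  have h1 : E * rA ∈ G := by
    apply Submonoid.subset_closure
    refine ⟨1, 0, 0, 0, Or.inr (Or.inr (by decide)), Or.inr (Or.inl (by decide)), ?_⟩
    simp
  have : rA = E⁻¹ * (E * rA) := by group
  rw [this]
  exact mul_mem (inv_mem hE) h1

lemma hrB : rB ∈ G := by
  have h1 : E * rB ∈ G := by
    apply Submonoid.subset_closure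
    refine ⟨0, 0, 1, 0, Or.inr (Or.inl (by decide)), Or.inr (Or.inr (by decide)), ?_⟩
    simp
  have : rB = E⁻¹ * (E * rB) := by group
  rw [this]
  exact mul_mem (inv_mem hE) h1

lemma ht01 : Equiv.swap (0:Fin 24) 1 ∈ G := by
  have hu : E⁻¹ * rB^3 * E ∈ G := mul_mem (mul_mem (inv_mem hE) (pow_mem hrB 3)) hE
  have hrA' : rA⁻¹ ∈ G := inv_mem hrA
  have e0 : rA * (E⁻¹ * rB^3 * E) * rA * rA * (E⁻¹ * rB^3 * E) * rA * rA * (E⁻¹ * rB^3 * E) * rA⁻¹ = (([0,2,7,5,3] : List (Fin 24)).formPerm) * (([1,4,8,6] : List (Fin 24)).formPerm) := by apply Equiv.ext; decide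
  have m0 : ((([0,2,7,5,3] : List (Fin 24)).formPerm) * (([1,4,8,6] : List (Fin 24)).formPerm)) ∈ G := by rw [← e0]; exact (mul_mem (mul_mem (mul_mem (mul_mem (mul_mem (mul_mem (mul_mem (mul_mem hrA hu) hrA) hrA) hu) hrA) hrA) hu) hrA')
  have e1 : (E⁻¹ * rB^3 * E) * rA⁻¹ * (E⁻¹ * rB^3 * E) * rA * rA * (E⁻¹ * rB^3 * E) * rA⁻¹ * (E⁻¹ * rB^3 * E) * rA⁻¹ = (([1,4,2] : List (Fin 24)).formPerm) * (([3,7,6,5] : List (Fin 24)).formPerm) := by apply Equiv.ext; decide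
  have m1 : ((([1,4,2] : List (Fin 24)).formPerm) * (([3,7,6,5] : List (Fin 24)).formPerm)) ∈ G := by rw [← e1]; exact (mul_mem (mul_mem (mul_mem (mul_mem (mul_mem (mul_mem (mul_mem (mul_mem hu hrA') hu) hrA) hrA) hu) hrA') hu) hrA')
  have e2 : (E⁻¹ * rB^3 * E) * rA * rA * (E⁻¹ * rB^3 * E) * rA * rA * (E⁻¹ * rB^3 * E) * rA * rA = (([0,7,4,2] : List (Fin 24)).formPerm) * (([1,5,3,6,8] : List (Fin 24)).formPerm) := by apply Equiv.ext; decide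
  have m2 : ((([0,7,4,2] : List (Fin 24)).formPerm) * (([1,5,3,6,8] : List (Fin 24)).formPerm)) ∈ G := by rw [← e2]; exact (mul_mem (mul_mem (mul_mem (mul_mem (mul_mem (mul_mem (mul_mem (mul_mem hu hrA) hrA) hu) hrA) hrA) hu) hrA) hrA)
  have hw : Equiv.swap (0:Fin 24) 1 =
      ((([0,2,7,5,3] : List (Fin 24)).formPerm) * (([1,4,8,6] : List (Fin 24)).formPerm)) *
      ((([1,4,2] : List (Fin 24)).formPerm) * (([3,7,6,5] : List (Fin 24)).formPerm)) *
      ((([0,7,4,2] : List (Fin 24)).formPerm) * (([1,5,3,6,8] : List (Fin 24)).formPerm)) := by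
    apply Equiv.ext; decide
  rw [hw]
  exact mul_mem (mul_mem m0 m1) m2

lemma hs02 : Equiv.swap (0:Fin 24) 2 ∈ G := by
  have ht : Equiv.swap (0:Fin 24) 1 ∈ G := ht01
  have hrA' : rA⁻¹ ∈ G := inv_mem hrA
  have hw : Equiv.swap (0:Fin 24) 2 = (Equiv.swap (0:Fin 24) 1) * rA * (Equiv.swap (0:Fin 24) 1) * rA⁻¹ * (Equiv.swap (0:Fin 24) 1) := by
    apply Equiv.ext; decide
  rw [hw]
  exact (mul_mem (mul_mem (mul_mem (mul_mem ht hrA) ht) hrA') ht)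

lemma hs06 : Equiv.swap (0:Fin 24) 6 ∈ G := by
  have ht : Equiv.swap (0:Fin 24) 1 ∈ G := ht01
  have hrA' : rA⁻¹ ∈ G := inv_mem hrA
  have hw : Equiv.swap (0:Fin 24) 6 = rA⁻¹ * (Equiv.swap (0:Fin 24) 1) * rA := by
    apply Equiv.ext; decide
  rw [hw]
  exact (mul_mem (mul_mem hrA' ht) hrA)

lemma hs07 : Equiv.swap (0:Fin 24) 7 ∈ G := by
  have ht : Equiv.swap (0:Fin 24) 1 ∈ G := ht01
  have hrA' : rA⁻¹ ∈ G := inv_mem hrA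
  have hw : Equiv.swap (0:Fin 24) 7 = rA⁻¹ * (Equiv.swap (0:Fin 24) 1) * rA⁻¹ * (Equiv.swap (0:Fin 24) 1) * rA * (Equiv.swap (0:Fin 24) 1) * rA := by
    apply Equiv.ext; decide
  rw [hw]
  exact (mul_mem (mul_mem (mul_mem (mul_mem (mul_mem (mul_mem hrA' ht) hrA') ht) hrA) ht) hrA)

lemma hs08 : Equiv.swap (0:Fin 24) 8 ∈ G := by
  have ht : Equiv.swap (0:Fin 24) 1 ∈ G := ht01
  have hrA' : rA⁻¹ ∈ G := inv_mem hrA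
  have hw : Equiv.swap (0:Fin 24) 8 = (Equiv.swap (0:Fin 24) 1) * rA * (Equiv.swap (0:Fin 24) 1) * rA * rA * (Equiv.swap (0:Fin 24) 1) * rA * (Equiv.swap (0:Fin 24) 1) * rA := by
    apply Equiv.ext; decide
  rw [hw]
  exact (mul_mem (mul_mem (mul_mem (mul_mem (mul_mem (mul_mem (mul_mem (mul_mem ht hrA) ht) hrA) hrA) ht) hrA) ht) hrA)

lemma hs12 : Equiv.swap (1:Fin 24) 2 ∈ G := by
  have ht : Equiv.swap (0:Fin 24) 1 ∈ G := ht01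
  have hrA' : rA⁻¹ ∈ G := inv_mem hrA
  have hw : Equiv.swap (1:Fin 24) 2 = rA * (Equiv.swap (0:Fin 24) 1) * rA⁻¹ := by
    apply Equiv.ext; decide
  rw [hw]
  exact (mul_mem (mul_mem hrA ht) hrA')

lemma hs16 : Equiv.swap (1:Fin 24) 6 ∈ G := by
  have ht : Equiv.swap (0:Fin 24) 1 ∈ G := ht01
  have hrA' : rA⁻¹ ∈ G := inv_mem hrA
  have hw : Equiv.swap (1:Fin 24) 6 = (Equiv.swap (0:Fin 24) 1) * rA⁻¹ * (Equiv.swap (0:Fin 24) 1) * rA * (Equiv.swap (0:Fin 24) 1) := by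
    apply Equiv.ext; decide
  rw [hw]
  exact (mul_mem (mul_mem (mul_mem (mul_mem ht hrA') ht) hrA) ht)

lemma hs17 : Equiv.swap (1:Fin 24) 7 ∈ G := by
  have ht : Equiv.swap (0:Fin 24) 1 ∈ G := ht01
  have hrA' : rA⁻¹ ∈ G := inv_mem hrA
  have hw : Equiv.swap (1:Fin 24) 7 = (Equiv.swap (0:Fin 24) 1) * rA⁻¹ * (Equiv.swap (0:Fin 24) 1) * rA⁻¹ * rA⁻¹ * (Equiv.swap (0:Fin 24) 1) * rA⁻¹ * (Equiv.swap (0:Fin 24) 1) * rA⁻¹ := by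
    apply Equiv.ext; decide
  rw [hw]
  exact (mul_mem (mul_mem (mul_mem (mul_mem (mul_mem (mul_mem (mul_mem (mul_mem ht hrA') ht) hrA') hrA') ht) hrA') ht) hrA')

lemma hs18 : Equiv.swap (1:Fin 24) 8 ∈ G := by
  have ht : Equiv.swap (0:Fin 24) 1 ∈ G := ht01
  have hrA' : rA⁻¹ ∈ G := inv_mem hrA
  have hw : Equiv.swap (1:Fin 24) 8 = rA * (Equiv.swap (0:Fin 24) 1) * rA * (Equiv.swap (0:Fin 24) 1) * rA⁻¹ * (Equiv.swap (0:Fin 24) 1) * rA⁻¹ := by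
    apply Equiv.ext; decide
  rw [hw]
  exact (mul_mem (mul_mem (mul_mem (mul_mem (mul_mem (mul_mem hrA ht) hrA) ht) hrA') ht) hrA')

lemma hs26 : Equiv.swap (2:Fin 24) 6 ∈ G := by
  have ht : Equiv.swap (0:Fin 24) 1 ∈ G := ht01
  have hrA' : rA⁻¹ ∈ G := inv_mem hrA
  have hw : Equiv.swap (2:Fin 24) 6 = rA⁻¹ * (Equiv.swap (0:Fin 24) 1) * rA * (Equiv.swap (0:Fin 24) 1) * rA * rA * (Equiv.swap (0:Fin 24) 1) * rA * (Equiv.swap (0:Fin 24) 1) * rA * rA := by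
    apply Equiv.ext; decide
  rw [hw]
  exact (mul_mem (mul_mem (mul_mem (mul_mem (mul_mem (mul_mem (mul_mem (mul_mem (mul_mem (mul_mem hrA' ht) hrA) ht) hrA) hrA) ht) hrA) ht) hrA) hrA)

lemma hs27 : Equiv.swap (2:Fin 24) 7 ∈ G := by
  have ht : Equiv.swap (0:Fin 24) 1 ∈ G := ht01
  have hrA' : rA⁻¹ ∈ G := inv_mem hrA
  have hw : Equiv.swap (2:Fin 24) 7 = rA * rA * (Equiv.swap (0:Fin 24) 1) * rA * (Equiv.swap (0:Fin 24) 1) * rA⁻¹ * (Equiv.swap (0:Fin 24) 1) * rA⁻¹ * rA⁻¹ := by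
    apply Equiv.ext; decide
  rw [hw]
  exact (mul_mem (mul_mem (mul_mem (mul_mem (mul_mem (mul_mem (mul_mem (mul_mem hrA hrA) ht) hrA) ht) hrA') ht) hrA') hrA')

lemma hs28 : Equiv.swap (2:Fin 24) 8 ∈ G := by
  have ht : Equiv.swap (0:Fin 24) 1 ∈ G := ht01
  have hrA' : rA⁻¹ ∈ G := inv_mem hrA
  have hw : Equiv.swap (2:Fin 24) 8 = rA * rA * (Equiv.swap (0:Fin 24) 1) * rA⁻¹ * rA⁻¹ := by
    apply Equiv.ext; decide
  rw [hw]
  exact (mul_mem (mul_mem (mul_mem (mul_mem hrA hrA) ht) hrA') hrA')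

lemma hs67 : Equiv.swap (6:Fin 24) 7 ∈ G := by
  have ht : Equiv.swap (0:Fin 24) 1 ∈ G := ht01
  have hrA' : rA⁻¹ ∈ G := inv_mem hrA
  have hw : Equiv.swap (6:Fin 24) 7 = rA⁻¹ * rA⁻¹ * (Equiv.swap (0:Fin 24) 1) * rA * rA := by
    apply Equiv.ext; decide
  rw [hw]
  exact (mul_mem (mul_mem (mul_mem (mul_mem hrA' hrA') ht) hrA) hrA)

lemma hs68 : Equiv.swap (6:Fin 24) 8 ∈ G := by
  have ht : Equiv.swap (0:Fin 24) 1 ∈ G := ht01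
  have hrA' : rA⁻¹ ∈ G := inv_mem hrA
  have hw : Equiv.swap (6:Fin 24) 8 = rA⁻¹ * rA⁻¹ * (Equiv.swap (0:Fin 24) 1) * rA⁻¹ * (Equiv.swap (0:Fin 24) 1) * rA * (Equiv.swap (0:Fin 24) 1) * rA * rA := by
    apply Equiv.ext; decide
  rw [hw]
  exact (mul_mem (mul_mem (mul_mem (mul_mem (mul_mem (mul_mem (mul_mem (mul_mem hrA' hrA') ht) hrA') ht) hrA) ht) hrA) hrA)

lemma hs78 : Equiv.swap (7:Fin 24) 8 ∈ G := by
  have ht : Equiv.swap (0:Fin 24) 1 ∈ G := ht01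
  have hrA' : rA⁻¹ ∈ G := inv_mem hrA
  have hw : Equiv.swap (7:Fin 24) 8 = rA * rA * rA * (Equiv.swap (0:Fin 24) 1) * rA * rA * rA := by
    apply Equiv.ext; decide
  rw [hw]
  exact (mul_mem (mul_mem (mul_mem (mul_mem (mul_mem (mul_mem hrA hrA) hrA) ht) hrA) hrA) hrA)



lemma swap_mem_G (a b : Fin 24) (ha : a ∈ ({0, 1, 2, 6, 7, 8} : Set (Fin 24)))
    (hb : b ∈ ({0, 1, 2, 6, 7, 8} : Set (Fin 24))) : Equiv.swap a b ∈ G := by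
  simp only [Set.mem_insert_iff, Set.mem_singleton_iff] at ha hb
  rcases ha with rfl|rfl|rfl|rfl|rfl|rfl <;> rcases hb with rfl|rfl|rfl|rfl|rfl|rfl <;>
    first
      | (rw [Equiv.swap_self]; exact one_mem G)
      | exact ht01 | exact hs02 | exact hs06 | exact hs07 | exact hs08
      | exact hs12 | exact hs16 | exact hs17 | exact hs18
      | exact hs26 | exact hs27 | exact hs28
      | exact hs67 | exact hs68 | exact hs78
      | (rw [Equiv.swap_comm];
         first
          | exact ht01 | exact hs02 | exact hs06 | exact hs07 | exact hs08
          | exact hs12 | exact hs16 | exact hs17 | exact hs18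
          | exact hs26 | exact hs27 | exact hs28
          | exact hs67 | exact hs68 | exact hs78)

instance : DecidablePred (· ∈ ({0, 1, 2, 6, 7, 8} : Set (Fin 24))) := fun x =>
  decidable_of_iff (x = 0 ∨ x = 1 ∨ x = 2 ∨ x = 6 ∨ x = 7 ∨ x = 8)
    (by simp [Set.mem_insert_iff, Set.mem_singleton_iff])

/-- Any permutation fixing every position outside quadrant A = {0,1,2,6,7,8}
belongs to the closure of S. -/
theorem quadrantA_perms_realizable (σ : Equiv.Perm (Fin 24))
    (h : ∀ p : Fin 24, p ∉ ({0, 1, 2, 6, 7, 8} : Set (Fin 24)) → σ p = p) :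
    σ ∈ Submonoid.closure S := by
  set A : Set (Fin 24) := {0, 1, 2, 6, 7, 8} with hA
  have hmem : ∀ x, x ∈ A ↔ σ x ∈ A := by
    intro x
    constructor
    · intro hx
      by_contra hq
      have h1 : σ (σ x) = σ x := h _ hq
      have h2 : σ x = x := σ.injective h1
      rw [h2] at hq; exact hq hx
    · intro hx
      by_contra hq
      have : σ x = x := h _ hq
      rw [this] at hx; exact hq hx
  replace hmem : ∀ x, σ x ∈ A ↔ x ∈ A := fun x => (hmem x).symm
  have hσ' := Equiv.Perm.subtypePerm σ hmem
  have hofs : Equiv.Perm.ofSubtype (Equiv.Perm.subtypePerm σ hmem) = σ :=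
    Equiv.Perm.ofSubtype_subtypePerm hmem (fun x hx => by
      by_contra hq
      exact hx (h x hq))
  have htop : Equiv.Perm.subtypePerm σ hmem ∈
      Subgroup.closure {τ : Equiv.Perm {x : Fin 24 // x ∈ A} | τ.IsSwap} := by
    rw [Equiv.Perm.closure_isSwap]; trivial
  have key : ∀ τ ∈ Subgroup.closure {τ : Equiv.Perm {x : Fin 24 // x ∈ A} | τ.IsSwap},
      Equiv.Perm.ofSubtype τ ∈ G := by
    intro τ hτ
    induction hτ using Subgroup.closure_induction with
    | mem τ hτ =>
      obtain ⟨x, y, hxy, rfl⟩ := hτ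
      rw [Equiv.Perm.ofSubtype_swap_eq]
      exact swap_mem_G x y x.2 y.2
    | one => rw [map_one]; exact one_mem G
    | mul x y _ _ hx hy => rw [map_mul]; exact mul_mem hx hy
    | inv x _ hx => rw [map_inv]; exact inv_mem hx
  have := key _ htop
  rw [hofs] at this
  exact this

end Volleyball
end

section
/- Variation distance for the lazy cyclic walk on 4 quadrants: for every natural number n ≥ 1, (1/2) · ∑_{j=0}^{3} | (∑_{k ∈ Finset.range (n+1), k % 4 = j} Nat.choose n k) / 2^n − 1/4 | = (1/2)^(n/2 + 1), where n/2 denotes the floor ⌊n/2⌋ and the arithmetic is in ℝ. -/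
open Finset

noncomputable def wA : ℕ → ℝ := fun k => if k % 4 = 0 then 1 else if k % 4 = 2 then -1 else 0
noncomputable def wB : ℕ → ℝ := fun k => if k % 4 = 1 then 1 else if k % 4 = 3 then -1 else 0

noncomputable def AA (n : ℕ) : ℝ := ∑ k ∈ range (n+1), (n.choose k : ℝ) * wA k
noncomputable def BB (n : ℕ) : ℝ := ∑ k ∈ range (n+1), (n.choose k : ℝ) * wB k

lemma pascal_sum (f : ℕ → ℝ) (n : ℕ) :
    ∑ k ∈ range (n+2), ((n+1).choose k : ℝ) * f k
    = ∑ k ∈ range (n+1), (n.choose k : ℝ) * f k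
    + ∑ k ∈ range (n+1), (n.choose k : ℝ) * f (k+1) := by
  rw [Finset.sum_range_succ' (fun k => ((n+1).choose k : ℝ) * f k)]
  have h1 : ∀ k ∈ range (n+1), (((n+1).choose (k+1) : ℝ)) * f (k+1)
      = (n.choose k : ℝ) * f (k+1) + (n.choose (k+1) : ℝ) * f (k+1) := by
    intro k _; rw [Nat.choose_succ_succ]; push_cast; ring
  rw [Finset.sum_congr rfl h1, Finset.sum_add_distrib]
  have h2 : ∑ k ∈ range (n+1), (n.choose (k+1) : ℝ) * f (k+1)
      = ∑ k ∈ range (n+1), (n.choose k : ℝ) * f k - f 0 := by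
    rw [Finset.sum_range_succ (fun k => (n.choose (k+1):ℝ) * f (k+1))]
    rw [Finset.sum_range_succ' (fun k => (n.choose k : ℝ) * f k)]
    simp
  rw [h2]
  simp
  ring

lemma wA_succ (k : ℕ) : wA (k+1) = - wB k := by
  unfold wA wB
  rcases (by omega : k%4=0 ∨ k%4=1 ∨ k%4=2 ∨ k%4=3) with h|h|h|h <;>
    norm_num [Nat.add_mod, h]

lemma wB_succ (k : ℕ) : wB (k+1) = wA k := by
  unfold wA wB
  rcases (by omega : k%4=0 ∨ k%4=1 ∨ k%4=2 ∨ k%4=3) with h|h|h|h <;>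
    norm_num [Nat.add_mod, h]

lemma AA_succ (n : ℕ) : AA (n+1) = AA n - BB n := by
  unfold AA BB
  rw [show n+1+1 = n+2 from rfl, pascal_sum]
  simp only [wA_succ, mul_neg, Finset.sum_neg_distrib]
  ring

lemma BB_succ (n : ℕ) : BB (n+1) = BB n + AA n := by
  unfold AA BB
  rw [show n+1+1 = n+2 from rfl, pascal_sum]
  simp only [wB_succ]

lemma AA_zero : AA 0 = 1 := by simp [AA, wA]
lemma BB_zero : BB 0 = 0 := by simp [BB, wB]

lemma AB_abs : ∀ n : ℕ, |AA n| + |BB n| = 2 ^ ((n+1)/2)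
    ∧ |AA (n+1)| + |BB (n+1)| = 2 ^ ((n+2)/2) := by
  intro n
  induction n with
  | zero =>
    have hA1 : AA 1 = 1 := by rw [AA_succ, AA_zero, BB_zero]; ring
    have hB1 : BB 1 = 1 := by rw [BB_succ, AA_zero, BB_zero]; ring
    norm_num [AA_zero, BB_zero, hA1, hB1]
  | succ n ih =>
    refine ⟨ih.2, ?_⟩
    have hA : AA (n+2) = -2 * BB n := by
      rw [show n+2 = (n+1)+1 from rfl, AA_succ, AA_succ, BB_succ]; ring
    have hB : BB (n+2) = 2 * AA n := by
      rw [show n+2 = (n+1)+1 from rfl, BB_succ, AA_succ, BB_succ]; ring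
    rw [hA, hB, abs_mul, abs_mul]
    have he : (n+3)/2 = (n+1)/2 + 1 := by omega
    rw [he, pow_succ]
    have h1 := ih.1
    rw [abs_neg] at *
    norm_num
    nlinarith [abs_nonneg (AA n), abs_nonneg (BB n)]

/-- Variation distance to uniformity for the lazy cyclic walk on 4 quadrants after n ≥ 1
games equals (1/2)^(⌊n/2⌋ + 1). -/
theorem lazy_cyclic_walk_tv (n : ℕ) (hn : 1 ≤ n) :
    (1/2 : ℝ) * ∑ j ∈ Finset.range 4,
      |(∑ k ∈ (Finset.range (n+1)).filter (fun k => k % 4 = j), (n.choose k : ℝ)) / 2 ^ n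
        - 1/4|
    = (1/2 : ℝ) ^ (n / 2 + 1) := by
  set s0 := ∑ k ∈ Finset.range (n+1), if k % 4 = 0 then (n.choose k:ℝ) else 0 with hs0
  set s1 := ∑ k ∈ Finset.range (n+1), if k % 4 = 1 then (n.choose k:ℝ) else 0 with hs1
  set s2 := ∑ k ∈ Finset.range (n+1), if k % 4 = 2 then (n.choose k:ℝ) else 0 with hs2
  set s3 := ∑ k ∈ Finset.range (n+1), if k % 4 = 3 then (n.choose k:ℝ) else 0 with hs3
  have hsum : s0 + s1 + s2 + s3 = 2^n := by
    have e : s0 + s1 + s2 + s3 = ∑ k ∈ range (n+1), (n.choose k : ℝ) := by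
      rw [hs0, hs1, hs2, hs3, ← Finset.sum_add_distrib, ← Finset.sum_add_distrib,
        ← Finset.sum_add_distrib]
      apply Finset.sum_congr rfl; intro k _
      rcases (by omega : k%4=0 ∨ k%4=1 ∨ k%4=2 ∨ k%4=3) with h|h|h|h <;> simp [h]
    rw [e]
    exact_mod_cast Nat.sum_range_choose n
  have halt : s0 + s2 - s1 - s3 = 0 := by
    have key : ∑ k ∈ range (n+1), (-1:ℝ)^k * n.choose k = 0 := by
      have h := Int.alternating_sum_range_choose (n := n)
      rw [if_neg (by omega : n ≠ 0)] at h
      exact_mod_cast h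
    have e : s0 + s2 - s1 - s3 = ∑ k ∈ range (n+1), (-1:ℝ)^k * n.choose k := by
      rw [hs0, hs1, hs2, hs3, ← Finset.sum_add_distrib, ← Finset.sum_sub_distrib,
        ← Finset.sum_sub_distrib]
      apply Finset.sum_congr rfl; intro k _
      rcases (by omega : k%4=0 ∨ k%4=1 ∨ k%4=2 ∨ k%4=3) with h|h|h|h
      · have he : Even k := Nat.even_iff.mpr (by omega)
        simp [h, he.neg_one_pow]
      · have ho : Odd k := Nat.odd_iff.mpr (by omega)
        simp [h, ho.neg_one_pow]
      · have he : Even k := Nat.even_iff.mpr (by omega)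
        simp [h, he.neg_one_pow]
      · have ho : Odd k := Nat.odd_iff.mpr (by omega)
        simp [h, ho.neg_one_pow]
    rw [e, key]
  have hA : s0 - s2 = AA n := by
    rw [hs0, hs2]
    unfold AA wA
    rw [← Finset.sum_sub_distrib]
    apply Finset.sum_congr rfl; intro k _
    rcases (by omega : k%4=0 ∨ k%4=1 ∨ k%4=2 ∨ k%4=3) with h|h|h|h <;> simp [h]
  have hB : s1 - s3 = BB n := by
    rw [hs1, hs3]
    unfold BB wB
    rw [← Finset.sum_sub_distrib]
    apply Finset.sum_congr rfl; intro k _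
    rcases (by omega : k%4=0 ∨ k%4=1 ∨ k%4=2 ∨ k%4=3) with h|h|h|h <;> simp [h]
  have e0 : s0 = (2^n + 2 * AA n)/4 := by linarith
  have e1 : s1 = (2^n + 2 * BB n)/4 := by linarith
  have e2 : s2 = (2^n - 2 * AA n)/4 := by linarith
  have e3 : s3 = (2^n - 2 * BB n)/4 := by linarith
  have p2 : (0:ℝ) < 2^n := by positivity
  have p2' : (0:ℝ) < 2^(n+1) := by positivity
  have t0 : |s0 / 2^n - 1/4| = |AA n| / 2^(n+1) := by
    have : s0 / 2^n - 1/4 = AA n / 2^(n+1) := by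
      rw [e0, pow_succ]; field_simp; ring
    rw [this, abs_div, abs_of_pos p2']
  have t1 : |s1 / 2^n - 1/4| = |BB n| / 2^(n+1) := by
    have : s1 / 2^n - 1/4 = BB n / 2^(n+1) := by
      rw [e1, pow_succ]; field_simp; ring
    rw [this, abs_div, abs_of_pos p2']
  have t2 : |s2 / 2^n - 1/4| = |AA n| / 2^(n+1) := by
    have : s2 / 2^n - 1/4 = -AA n / 2^(n+1) := by
      rw [e2, pow_succ]; field_simp; ring
    rw [this, abs_div, abs_of_pos p2', abs_neg]
  have t3 : |s3 / 2^n - 1/4| = |BB n| / 2^(n+1) := by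
    have : s3 / 2^n - 1/4 = -BB n / 2^(n+1) := by
      rw [e3, pow_succ]; field_simp; ring
    rw [this, abs_div, abs_of_pos p2', abs_neg]
  rw [show (4:ℕ) = 3+1 from rfl, Finset.sum_range_succ, Finset.sum_range_succ,
    Finset.sum_range_succ, Finset.sum_range_succ, Finset.sum_range_zero]
  simp only [Finset.sum_filter]
  rw [← hs0, ← hs1, ← hs2, ← hs3, t0, t1, t2, t3]
  have habs : |AA n| + |BB n| = 2 ^ ((n+1)/2) := (AB_abs n).1
  have hexp : (2:ℝ)^((n+1)/2) * 2^(n/2+1) = 2^(n+1) := by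
    rw [← pow_add]; congr 1; omega
  rw [div_pow, one_pow]
  rw [show (0:ℝ) + |AA n| / 2^(n+1) + |BB n| / 2^(n+1) + |AA n| / 2^(n+1) + |BB n| / 2^(n+1)
      = 2 * (|AA n| + |BB n|) / 2^(n+1) from by ring, habs]
  field_simp
  nlinarith [hexp]
end

section
/- Random teams, never opponents over seven games: for any two fixed distinct players a, b : Fin 24, the number of 7-tuples of permutations f : Fin 7 → Equiv.Perm (Fin 24) (independent uniformly random assignments for 7 games) such that for every i, q (f i b) ≠ opp (q (f i a)) satisfies 23^7 · |{f : Fin 7 → Equiv.Perm (Fin 24) | ∀ i, q (f i b) ≠ opp (q (f i a))}| = 17^7 · (24!)^7; that is, with independent uniformly random team assignments in each of 7 games, the probability that player b is never on the team opposing player a equals (17/23)^7. -/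
namespace Volleyball

/-- The quadrant of each position: A↦0, B↦1, C↦2, D↦3. -/
def q : Fin 24 → Fin 4 :=
  ![0,0,0,1,1,1,0,0,0,1,1,1,2,2,2,3,3,3,2,2,2,3,3,3]

/-- The opposing quadrant: A↔C and B↔D. -/
def opp : Fin 4 → Fin 4 := ![2,3,0,1]

open Finset Equiv

lemma exists_perm {α : Type*} [DecidableEq α] {x y x' y' : α} (h : x ≠ y) (h' : x' ≠ y') :
    ∃ τ : Equiv.Perm α, τ x = x' ∧ τ y = y' := by
  refine ⟨(Equiv.swap x x').trans (Equiv.swap (Equiv.swap x x' y) y'), ?_, ?_⟩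
  · simp only [Equiv.trans_apply, Equiv.swap_apply_left]
    apply Equiv.swap_apply_of_ne_of_ne _ h'
    intro hx
    have h2 : x = y := by simpa using congrArg (Equiv.swap x x') hx
    exact h h2
  · simp

lemma fiber_eq (a b : Fin 24) (p p' : Fin 24 × Fin 24) (hp : p.1 ≠ p.2) (hp' : p'.1 ≠ p'.2) :
    (univ.filter fun g : Equiv.Perm (Fin 24) => (g a, g b) = p).card =
    (univ.filter fun g : Equiv.Perm (Fin 24) => (g a, g b) = p').card := by
  obtain ⟨τ, h1, h2⟩ := exists_perm hp hp'
  apply Finset.card_bij' (fun g _ => τ * g) (fun g _ => τ⁻¹ * g)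
  · intro g hg
    simp only [mem_filter, mem_univ, true_and] at hg ⊢
    have ha : g a = p.1 := by rw [← hg]
    have hb : g b = p.2 := by rw [← hg]
    simp [Equiv.Perm.mul_apply, ha, hb, h1, h2]
  · intro g hg
    simp only [mem_filter, mem_univ, true_and] at hg ⊢
    have ha : g a = p'.1 := by rw [← hg]
    have hb : g b = p'.2 := by rw [← hg]
    have : τ⁻¹ p'.1 = p.1 := by rw [← h1]; simp
    have h2' : τ⁻¹ p'.2 = p.2 := by rw [← h2]; simp
    simp [Equiv.Perm.mul_apply, ha, hb, this, h2']
  · intro g _; simp [mul_assoc]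
  · intro g _; simp [← mul_assoc]

set_option maxRecDepth 4000 in
lemma single (a b : Fin 24) (hab : a ≠ b) :
    23 * (univ.filter fun g : Equiv.Perm (Fin 24) => q (g b) ≠ opp (q (g a))).card
      = 17 * Nat.factorial 24 := by
  set c := (univ.filter fun g : Equiv.Perm (Fin 24) =>
      (g a, g b) = ((0 : Fin 24), (1 : Fin 24))).card with hc
  have hmem : ∀ g : Equiv.Perm (Fin 24), (g a, g b) ∈ (univ : Finset (Fin 24)).offDiag := by
    intro g
    exact Finset.mem_offDiag.2 ⟨mem_univ _, mem_univ _, fun h => hab (g.injective h)⟩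
  have hfib : ∀ p ∈ (univ : Finset (Fin 24)).offDiag,
      (univ.filter fun g : Equiv.Perm (Fin 24) => (g a, g b) = p).card = c := by
    intro p hp
    obtain ⟨-, -, hne⟩ := Finset.mem_offDiag.1 hp
    exact fiber_eq a b p ((0 : Fin 24), (1 : Fin 24)) hne (by decide)
  -- total count
  have htot : Nat.factorial 24 = 552 * c := by
    have h1 : (univ : Finset (Equiv.Perm (Fin 24))).card =
        ∑ p ∈ (univ : Finset (Fin 24)).offDiag,
          (univ.filter fun g : Equiv.Perm (Fin 24) => (g a, g b) = p).card :=
      Finset.card_eq_sum_card_fiberwise (fun g _ => hmem g)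
    rw [Finset.sum_congr rfl hfib, Finset.sum_const, smul_eq_mul] at h1
    have h2 : ((univ : Finset (Fin 24)).offDiag).card = 552 := by
      rw [Finset.offDiag_card]; simp
    rw [h2] at h1
    rw [← h1, Finset.card_univ, Fintype.card_perm, Fintype.card_fin]
  -- good count
  have hgood : (univ.filter fun g : Equiv.Perm (Fin 24) => q (g b) ≠ opp (q (g a))).card
      = 408 * c := by
    set T := (univ : Finset (Fin 24)).offDiag.filter
        (fun p : Fin 24 × Fin 24 => q p.2 ≠ opp (q p.1)) with hT
    have h1 : (univ.filter fun g : Equiv.Perm (Fin 24) => q (g b) ≠ opp (q (g a))).card =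
        ∑ p ∈ T, ((univ.filter fun g : Equiv.Perm (Fin 24) => q (g b) ≠ opp (q (g a))).filter
          (fun g => (g a, g b) = p)).card := by
      apply Finset.card_eq_sum_card_fiberwise
      intro g hg
      simp only [Finset.mem_coe, mem_filter, mem_univ, true_and] at hg
      exact Finset.mem_filter.2 ⟨hmem g, hg⟩
    have h2 : ∀ p ∈ T, ((univ.filter fun g : Equiv.Perm (Fin 24) =>
        q (g b) ≠ opp (q (g a))).filter (fun g => (g a, g b) = p)).card = c := by
      intro p hp
      obtain ⟨hpd, hpq⟩ := Finset.mem_filter.1 hp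
      have : (univ.filter fun g : Equiv.Perm (Fin 24) =>
          q (g b) ≠ opp (q (g a))).filter (fun g => (g a, g b) = p) =
          univ.filter fun g : Equiv.Perm (Fin 24) => (g a, g b) = p := by
        ext g
        simp only [Finset.mem_filter, mem_univ, true_and, and_iff_right_iff_imp]
        intro hg
        have ha : g a = p.1 := by rw [← hg]
        have hb : g b = p.2 := by rw [← hg]
        rw [ha, hb]; exact hpq
      rw [this]
      exact hfib p hpd
    rw [h1, Finset.sum_congr rfl h2, Finset.sum_const, smul_eq_mul]
    congr 1
  rw [hgood, htot]; ring

/-- With independent uniformly random team assignments in each of 7 games, the probability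
that player b is never on the team opposing player a equals (17/23)^7. -/
theorem random_never_opponents (a b : Fin 24) (hab : a ≠ b) :
    23 ^ 7 * (Finset.univ.filter
        (fun f : Fin 7 → Equiv.Perm (Fin 24) =>
          ∀ i, q (f i b) ≠ opp (q (f i a)))).card =
      17 ^ 7 * (Nat.factorial 24) ^ 7 := by
  have hset : (Finset.univ.filter
        (fun f : Fin 7 → Equiv.Perm (Fin 24) =>
          ∀ i, q (f i b) ≠ opp (q (f i a)))) =
      Fintype.piFinset (fun _ : Fin 7 =>
        univ.filter fun g : Equiv.Perm (Fin 24) => q (g b) ≠ opp (q (g a))) := by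
    ext f
    simp [Fintype.mem_piFinset]
  rw [hset, Fintype.card_piFinset]
  rw [Finset.prod_const, Finset.card_univ, Fintype.card_fin]
  rw [← mul_pow, single a b hab, mul_pow]

end Volleyball
end

section
/- Random teams, never teammates over seven games: for any two fixed distinct players a, b : Fin 24, the number of 7-tuples of permutations f : Fin 7 → Equiv.Perm (Fin 24) such that for every i, q (f i b) ≠ q (f i a) satisfies 23^7 · |{f : Fin 7 → Equiv.Perm (Fin 24) | ∀ i, q (f i b) ≠ q (f i a)}| = 18^7 · (24!)^7; that is, with independent uniformly random team assignments in each of 7 games, the probability that player b is never on the same team as player a equals (18/23)^7. -/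
namespace Volleyball

lemma exists_perm_two {α : Type*} [DecidableEq α] {x y u v : α}
    (hxy : x ≠ y) (huv : u ≠ v) : ∃ τ : Equiv.Perm α, τ x = u ∧ τ y = v := by
  classical
  set τ₁ := Equiv.swap x u with hτ₁
  have h1 : τ₁ x = u := Equiv.swap_apply_left x u
  have hy' : τ₁ y ≠ u := by
    intro h
    exact hxy (τ₁.injective (h1.trans h.symm))
  set τ₂ := Equiv.swap (τ₁ y) v with hτ₂
  refine ⟨τ₂ * τ₁, ?_, ?_⟩
  · show τ₂ (τ₁ x) = u
    rw [h1, hτ₂, Equiv.swap_apply_of_ne_of_ne (Ne.symm hy') huv]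
  · show τ₂ (τ₁ y) = v
    exact Equiv.swap_apply_left _ _

lemma fiber_card (a b : Fin 24) (hab : a ≠ b) (p : Fin 24 × Fin 24) (hp : p.1 ≠ p.2) :
    (Finset.univ.filter (fun σ : Equiv.Perm (Fin 24) => (σ a, σ b) = p)).card =
    (Finset.univ.filter (fun σ : Equiv.Perm (Fin 24) => (σ a, σ b) = ((0 : Fin 24), (1 : Fin 24)))).card := by
  obtain ⟨τ, hτ1, hτ2⟩ := exists_perm_two hp (show (0 : Fin 24) ≠ 1 by decide)
  apply Finset.card_bij' (fun σ _ => τ * σ) (fun σ _ => τ⁻¹ * σ)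
  · intro σ hσ
    simp only [Finset.mem_filter, Finset.mem_univ, true_and] at hσ ⊢
    have h1 : σ a = p.1 := congrArg Prod.fst hσ
    have h2 : σ b = p.2 := congrArg Prod.snd hσ
    simp [Equiv.Perm.mul_apply, h1, h2, hτ1, hτ2]
  · intro σ hσ
    simp only [Finset.mem_filter, Finset.mem_univ, true_and] at hσ ⊢
    have h1 : σ a = 0 := congrArg Prod.fst hσ
    have h2 : σ b = 1 := congrArg Prod.snd hσ
    have e1 : τ⁻¹ (σ a) = p.1 := by rw [h1, ← hτ1]; simp
    have e2 : τ⁻¹ (σ b) = p.2 := by rw [h2, ← hτ2]; simp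
    simp [Equiv.Perm.mul_apply, e1, e2, Prod.ext_iff]
  · intro σ _; simp [mul_assoc]
  · intro σ _; simp [← mul_assoc]

set_option maxRecDepth 40000 in
lemma Dcard : (Finset.univ.filter (fun p : Fin 24 × Fin 24 => p.1 ≠ p.2)).card = 552 := by decide

set_option maxRecDepth 40000 in
lemma Gcard : (Finset.univ.filter (fun p : Fin 24 × Fin 24 => q p.2 ≠ q p.1)).card = 432 := by decide

lemma one_game (a b : Fin 24) (hab : a ≠ b) :
    23 * (Finset.univ.filter
        (fun σ : Equiv.Perm (Fin 24) => q (σ b) ≠ q (σ a))).card =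
      18 * Nat.factorial 24 := by
  classical
  set c := (Finset.univ.filter (fun σ : Equiv.Perm (Fin 24) => (σ a, σ b) = ((0 : Fin 24), (1 : Fin 24)))).card with hc
  set D : Finset (Fin 24 × Fin 24) := Finset.univ.filter (fun p => p.1 ≠ p.2) with hD
  set G : Finset (Fin 24 × Fin 24) := Finset.univ.filter (fun p => q p.2 ≠ q p.1) with hG
  have hDcard : D.card = 552 := Dcard
  have hGcard : G.card = 432 := Gcard
  have hGD : ∀ p ∈ G, p.1 ≠ p.2 := by
    intro p hp h
    simp only [hG, Finset.mem_filter] at hp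
    exact hp.2 (by rw [h])
  have htot : Nat.factorial 24 = 552 * c := by
    have h := Finset.card_eq_sum_card_fiberwise
      (f := fun σ : Equiv.Perm (Fin 24) => (σ a, σ b)) (s := Finset.univ) (t := D)
      (by intro σ _; simp [hD, hab, fun h => hab (σ.injective h)])
    rw [Finset.card_univ, Fintype.card_perm, Fintype.card_fin] at h
    rw [h, Finset.sum_congr rfl (fun p hp => fiber_card a b hab p
      (by simpa [hD] using hp)), Finset.sum_const, hDcard, smul_eq_mul]
  have hS : (Finset.univ.filter
      (fun σ : Equiv.Perm (Fin 24) => q (σ b) ≠ q (σ a))).card = 432 * c := by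
    have h := Finset.card_eq_sum_card_fiberwise
      (f := fun σ : Equiv.Perm (Fin 24) => (σ a, σ b))
      (s := Finset.univ.filter (fun σ : Equiv.Perm (Fin 24) => q (σ b) ≠ q (σ a))) (t := G)
      (by intro σ hσ; simp only [Finset.mem_coe, Finset.mem_filter, Finset.mem_univ, true_and] at hσ
          simp [hG, hσ])
    rw [h]
    have : ∀ p ∈ G, ((Finset.univ.filter (fun σ : Equiv.Perm (Fin 24) => q (σ b) ≠ q (σ a))).filter
        (fun σ => (σ a, σ b) = p)).card = c := by
      intro p hp
      have hq : q p.2 ≠ q p.1 := by simpa [hG] using hp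
      rw [Finset.filter_filter]
      have : (Finset.univ.filter (fun σ : Equiv.Perm (Fin 24) =>
          q (σ b) ≠ q (σ a) ∧ (σ a, σ b) = p)) =
          (Finset.univ.filter (fun σ : Equiv.Perm (Fin 24) => (σ a, σ b) = p)) := by
        apply Finset.filter_congr
        intro σ _
        constructor
        · exact fun h => h.2
        · intro h
          have h1 : σ a = p.1 := congrArg Prod.fst h
          have h2 : σ b = p.2 := congrArg Prod.snd h
          exact ⟨by rw [h1, h2]; exact hq, h⟩
      rw [this, fiber_card a b hab p (hGD p hp)]
    rw [Finset.sum_congr rfl this, Finset.sum_const, hGcard, smul_eq_mul]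
  rw [hS, htot]; ring

/-- With independent uniformly random team assignments in each of 7 games, the probability
that player b is never on the same team as player a equals (18/23)^7. -/
theorem random_never_teammates (a b : Fin 24) (hab : a ≠ b) :
    23 ^ 7 * (Finset.univ.filter
        (fun f : Fin 7 → Equiv.Perm (Fin 24) =>
          ∀ i, q (f i b) ≠ q (f i a))).card =
      18 ^ 7 * (Nat.factorial 24) ^ 7 := by
  classical
  have hpi : (Finset.univ.filter
        (fun f : Fin 7 → Equiv.Perm (Fin 24) =>
          ∀ i, q (f i b) ≠ q (f i a))) =
      Fintype.piFinset (fun _ : Fin 7 =>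
        Finset.univ.filter (fun σ : Equiv.Perm (Fin 24) => q (σ b) ≠ q (σ a))) := by
    ext f
    simp [Fintype.mem_piFinset]
  rw [hpi, Fintype.card_piFinset]
  simp only [Finset.prod_const, Finset.card_univ, Fintype.card_fin]
  rw [← mul_pow, one_game a b hab, mul_pow]
end Volleyball
end

section
/- Geometric separation parameter for teammates: let F = {3, 4, 5} ⊆ ZMod 6 (the front-row positions within a team whose 6 positions are labeled cyclically by ZMod 6). For every i : ZMod 6 and every d ∈ {1, 2, 3} (a natural number, coerced into ZMod 6), the number of rotation amounts x ∈ ZMod 6 such that exactly one of i + x and i + d + x lies in F equals 2·d. (Hence two teammates at cyclic distance d = 1, 2, 3 are separated at the end of a game, whose rotation amount is uniform on ZMod 6, with probability d/3.) -/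
/-- Teammates at cyclic distance d ∈ {1,2,3} are separated (exactly one of them lands in
the front row F = {3,4,5}) by exactly 2·d of the 6 possible rotation amounts. -/
theorem separation_count (i : ZMod 6) (d : ℕ) (hd : d ∈ ({1, 2, 3} : Finset ℕ)) :
    (Finset.univ.filter (fun x : ZMod 6 =>
        Xor (i + x ∈ ({3, 4, 5} : Finset (ZMod 6)))
             (i + (d : ZMod 6) + x ∈ ({3, 4, 5} : Finset (ZMod 6))))).card = 2 * d := by
  fin_cases hd <;> fin_cases i <;> decide
end

section
/- A single player's quadrant performs the lazy cyclic walk: define the weight w : ZMod 6 × ZMod 6 → ℝ by w (x, y) = 1/12 if y = x, 1/24 if y = x + 1 or y = x − 1, and 0 otherwise (so ∑_{(x,y)} w (x, y) = 1). For every position p : Fin 24, ∑ over (x₁, x₂, x₃, x₄) ∈ (ZMod 6)⁴ of w (x₁, x₂) · w (x₃, x₄) · (indicator that q (g p) = q p) = 1/2, and ∑ over (x₁, x₂, x₃, x₄) of w (x₁, x₂) · w (x₃, x₄) · (indicator that q (g p) = nxt (q p)) = 1/2, where g = E ∘ r_A^{x₁} ∘ r_C^{x₂} ∘ r_B^{x₃}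 ∘ r_D^{x₄} (rotation exponents taken via any representatives in {0,…,5} of x₁, x₂, x₃, x₄) and nxt : Fin 4 → Fin 4 is given by nxt 0 = 1, nxt 1 = 3, nxt 3 = 2, nxt 2 = 0 (the cyclic order A→B→D→C→A). That is, under one step of the chain, the occupant of any fixed position stays in its quadrant with probability 1/2 and moves to the next quadrant with probability 1/2. -/
namespace Volleyball

/-- The next quadrant in the cyclic order A→B→D→C→A. -/
def nxt : Fin 4 → Fin 4 := ![1, 3, 0, 2]

/-- The weight of a court's pair of rotation amounts: the first is uniform on ZMod 6 and
the second equals it plus −1, 0, +1 with probabilities 1/4, 1/2, 1/4. -/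
noncomputable def w (p : ZMod 6 × ZMod 6) : ℝ :=
  if p.2 = p.1 then 1/12 else if p.2 = p.1 + 1 ∨ p.2 = p.1 - 1 then 1/24 else 0

noncomputable def v (c : ZMod 6) : ℝ :=
  1/24 * ((if c = 0 then 1 else 0) + (if c = 0 ∨ c = 1 ∨ c = -1 then 1 else 0))

lemma w_eq_v (a b : ZMod 6) : w (a, b) = v (b - a) := by
  simp only [w, v]
  by_cases h0 : b = a
  · simp [h0]; norm_num
  · have h0' : b - a ≠ 0 := sub_ne_zero.mpr h0
    by_cases h1 : b = a + 1
    · have : b - a = 1 := by rw [h1]; ring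
      simp [h0, h1, this, h0', show (1:ZMod 6) ≠ 0 from by decide]
    · by_cases h2 : b = a - 1
      · have : b - a = -1 := by rw [h2]; ring
        simp [h0, h1, h2, this, h0', show (-1:ZMod 6) ≠ 0 from by decide,
              show (-1:ZMod 6) ≠ 1 from by decide, show (1:ZMod 6) ≠ 0 from by decide]
      · have h1' : b - a ≠ 1 := fun h => h1 (by rw [sub_eq_iff_eq_add] at h; rw [h, add_comm])
        have h2' : b - a ≠ -1 := fun h => h2 (by rw [sub_eq_iff_eq_add] at h; rw [h]; ring)
        simp [h0, h1, h2, h0', h1', h2']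

lemma vsum : ∑ c : ZMod 6, v c = 1/6 := by
  simp only [v]
  rw [← Finset.mul_sum, Finset.sum_add_distrib, Finset.sum_boole, Finset.sum_boole,
      show (Finset.univ.filter fun c : ZMod 6 => c = 0).card = 1 from by decide,
      show (Finset.univ.filter fun c : ZMod 6 => c = 0 ∨ c = 1 ∨ c = -1).card = 3 from by decide]
  norm_num

lemma wsum1 (a : ZMod 6) : ∑ b : ZMod 6, w (a, b) = 1/6 := by
  simp only [w_eq_v]
  rw [Fintype.sum_equiv (Equiv.subRight a) (fun b => v (b - a)) v (fun b => rfl), vsum]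

lemma wsum2 (b : ZMod 6) : ∑ a : ZMod 6, w (a, b) = 1/6 := by
  simp only [w_eq_v]
  rw [Fintype.sum_equiv (Equiv.subLeft b) (fun a => v (b - a)) v (fun x => rfl), vsum]

lemma wtot : ∑ a : ZMod 6, ∑ b : ZMod 6, w (a, b) = 1 := by
  simp only [wsum1]
  rw [Finset.sum_const, Finset.card_univ]
  norm_num [ZMod.card]

lemma inner34 (F : ℝ) (x₁ x₂ : ZMod 6) :
    (∑ x₃ : ZMod 6, ∑ x₄ : ZMod 6, w (x₁, x₂) * w (x₃, x₄) * F)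
      = w (x₁, x₂) * F := by
  have : (∑ x₃ : ZMod 6, ∑ x₄ : ZMod 6, w (x₁, x₂) * w (x₃, x₄) * F)
      = (w (x₁, x₂) * F) * ∑ x₃ : ZMod 6, ∑ x₄ : ZMod 6, w (x₃, x₄) := by
    rw [Finset.mul_sum]
    exact Finset.sum_congr rfl fun x₃ _ => by
      rw [Finset.mul_sum]; exact Finset.sum_congr rfl fun x₄ _ => by ring
  rw [this, wtot, mul_one]

lemma L1 (F : ZMod 6 → ℝ) :
    (∑ x₁ : ZMod 6, ∑ x₂ : ZMod 6, ∑ x₃ : ZMod 6, ∑ x₄ : ZMod 6,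
      w (x₁, x₂) * w (x₃, x₄) * F x₁) = (∑ a : ZMod 6, F a) / 6 := by
  calc (∑ x₁ : ZMod 6, ∑ x₂ : ZMod 6, ∑ x₃ : ZMod 6, ∑ x₄ : ZMod 6,
      w (x₁, x₂) * w (x₃, x₄) * F x₁)
      = ∑ x₁ : ZMod 6, ∑ x₂ : ZMod 6, w (x₁, x₂) * F x₁ :=
        Finset.sum_congr rfl fun x₁ _ => Finset.sum_congr rfl fun x₂ _ => inner34 _ x₁ x₂
    _ = ∑ x₁ : ZMod 6, (∑ x₂ : ZMod 6, w (x₁, x₂)) * F x₁ :=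
        Finset.sum_congr rfl fun x₁ _ => by rw [Finset.sum_mul]
    _ = ∑ x₁ : ZMod 6, F x₁ * (1/6) :=
        Finset.sum_congr rfl fun x₁ _ => by rw [wsum1, mul_comm]
    _ = (∑ a : ZMod 6, F a) / 6 := by rw [← Finset.sum_mul]; ring

lemma L2 (F : ZMod 6 → ℝ) :
    (∑ x₁ : ZMod 6, ∑ x₂ : ZMod 6, ∑ x₃ : ZMod 6, ∑ x₄ : ZMod 6,
      w (x₁, x₂) * w (x₃, x₄) * F x₂) = (∑ a : ZMod 6, F a) / 6 := by
  calc (∑ x₁ : ZMod 6, ∑ x₂ : ZMod 6, ∑ x₃ : ZMod 6, ∑ x₄ : ZMod 6,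
      w (x₁, x₂) * w (x₃, x₄) * F x₂)
      = ∑ x₁ : ZMod 6, ∑ x₂ : ZMod 6, w (x₁, x₂) * F x₂ :=
        Finset.sum_congr rfl fun x₁ _ => Finset.sum_congr rfl fun x₂ _ => inner34 _ x₁ x₂
    _ = ∑ x₂ : ZMod 6, ∑ x₁ : ZMod 6, w (x₁, x₂) * F x₂ := Finset.sum_comm
    _ = ∑ x₂ : ZMod 6, (∑ x₁ : ZMod 6, w (x₁, x₂)) * F x₂ :=
        Finset.sum_congr rfl fun x₂ _ => by rw [Finset.sum_mul]
    _ = ∑ x₂ : ZMod 6, F x₂ * (1/6) :=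
        Finset.sum_congr rfl fun x₂ _ => by rw [wsum2, mul_comm]
    _ = (∑ a : ZMod 6, F a) / 6 := by rw [← Finset.sum_mul]; ring

lemma inner34' (c : ZMod 6 → ℝ) (x₁ x₂ : ZMod 6) :
    (∑ x₃ : ZMod 6, ∑ x₄ : ZMod 6, w (x₁, x₂) * w (x₃, x₄) * c x₃)
      = w (x₁, x₂) * ((∑ a : ZMod 6, c a) / 6) := by
  calc (∑ x₃ : ZMod 6, ∑ x₄ : ZMod 6, w (x₁, x₂) * w (x₃, x₄) * c x₃)
      = ∑ x₃ : ZMod 6, (w (x₁, x₂) * c x₃) * ∑ x₄ : ZMod 6, w (x₃, x₄) :=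
        Finset.sum_congr rfl fun x₃ _ => by
          rw [Finset.mul_sum]; exact Finset.sum_congr rfl fun x₄ _ => by ring
    _ = ∑ x₃ : ZMod 6, w (x₁, x₂) * c x₃ * (1/6) :=
        Finset.sum_congr rfl fun x₃ _ => by rw [wsum1]
    _ = w (x₁, x₂) * ((∑ a : ZMod 6, c a) / 6) := by
        rw [← Finset.sum_mul, ← Finset.mul_sum]; ring

lemma inner34'' (c : ZMod 6 → ℝ) (x₁ x₂ : ZMod 6) :
    (∑ x₃ : ZMod 6, ∑ x₄ : ZMod 6, w (x₁, x₂) * w (x₃, x₄) * c x₄)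
      = w (x₁, x₂) * ((∑ a : ZMod 6, c a) / 6) := by
  calc (∑ x₃ : ZMod 6, ∑ x₄ : ZMod 6, w (x₁, x₂) * w (x₃, x₄) * c x₄)
      = ∑ x₄ : ZMod 6, ∑ x₃ : ZMod 6, w (x₁, x₂) * w (x₃, x₄) * c x₄ := Finset.sum_comm
    _ = ∑ x₄ : ZMod 6, (w (x₁, x₂) * c x₄) * ∑ x₃ : ZMod 6, w (x₃, x₄) :=
        Finset.sum_congr rfl fun x₄ _ => by
          rw [Finset.mul_sum]; exact Finset.sum_congr rfl fun x₃ _ => by ring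
    _ = ∑ x₄ : ZMod 6, w (x₁, x₂) * c x₄ * (1/6) :=
        Finset.sum_congr rfl fun x₄ _ => by rw [wsum2]
    _ = w (x₁, x₂) * ((∑ a : ZMod 6, c a) / 6) := by
        rw [← Finset.sum_mul, ← Finset.mul_sum]; ring

lemma outer12 (F : ℝ) :
    (∑ x₁ : ZMod 6, ∑ x₂ : ZMod 6, w (x₁, x₂) * F) = F := by
  have : (∑ x₁ : ZMod 6, ∑ x₂ : ZMod 6, w (x₁, x₂) * F)
      = (∑ x₁ : ZMod 6, ∑ x₂ : ZMod 6, w (x₁, x₂)) * F := by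
    rw [Finset.sum_mul]
    exact Finset.sum_congr rfl fun x₁ _ => by rw [Finset.sum_mul]
  rw [this, wtot, one_mul]

lemma L3 (F : ZMod 6 → ℝ) :
    (∑ x₁ : ZMod 6, ∑ x₂ : ZMod 6, ∑ x₃ : ZMod 6, ∑ x₄ : ZMod 6,
      w (x₁, x₂) * w (x₃, x₄) * F x₃) = (∑ a : ZMod 6, F a) / 6 := by
  calc (∑ x₁ : ZMod 6, ∑ x₂ : ZMod 6, ∑ x₃ : ZMod 6, ∑ x₄ : ZMod 6,
      w (x₁, x₂) * w (x₃, x₄) * F x₃)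
      = ∑ x₁ : ZMod 6, ∑ x₂ : ZMod 6, w (x₁, x₂) * ((∑ a : ZMod 6, F a) / 6) :=
        Finset.sum_congr rfl fun x₁ _ => Finset.sum_congr rfl fun x₂ _ => inner34' F x₁ x₂
    _ = (∑ a : ZMod 6, F a) / 6 := outer12 _

lemma L4 (F : ZMod 6 → ℝ) :
    (∑ x₁ : ZMod 6, ∑ x₂ : ZMod 6, ∑ x₃ : ZMod 6, ∑ x₄ : ZMod 6,
      w (x₁, x₂) * w (x₃, x₄) * F x₄) = (∑ a : ZMod 6, F a) / 6 := by
  calc (∑ x₁ : ZMod 6, ∑ x₂ : ZMod 6, ∑ x₃ : ZMod 6, ∑ x₄ : ZMod 6,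
      w (x₁, x₂) * w (x₃, x₄) * F x₄)
      = ∑ x₁ : ZMod 6, ∑ x₂ : ZMod 6, w (x₁, x₂) * ((∑ a : ZMod 6, F a) / 6) :=
        Finset.sum_congr rfl fun x₁ _ => Finset.sum_congr rfl fun x₂ _ => inner34'' F x₁ x₂
    _ = (∑ a : ZMod 6, F a) / 6 := outer12 _

lemma fixA : ∀ z : Fin 24, q z = 0 → rB z = z ∧ rC z = z ∧ rD z = z := by decide
lemma fixB : ∀ z : Fin 24, q z = 1 → rA z = z ∧ rC z = z ∧ rD z = z := by decide
lemma fixC : ∀ z : Fin 24, q z = 2 → rA z = z ∧ rB z = z ∧ rD z = z := by decide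
lemma fixD : ∀ z : Fin 24, q z = 3 → rA z = z ∧ rB z = z ∧ rC z = z := by decide
lemma presB : ∀ z : Fin 24, q z = 1 → q (rB z) = 1 := by decide
lemma presC : ∀ z : Fin 24, q z = 2 → q (rC z) = 2 := by decide
lemma presD : ∀ z : Fin 24, q z = 3 → q (rD z) = 3 := by decide

lemma pow_pres {σ : Equiv.Perm (Fin 24)} {t : Fin 4} (h : ∀ z, q z = t → q (σ z) = t)
    {z : Fin 24} (hz : q z = t) : ∀ n : ℕ, q ((σ ^ n) z) = t
  | 0 => by simpa using hz
  | n+1 => by rw [pow_succ', Equiv.Perm.mul_apply]; exact h _ (pow_pres h hz n)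

lemma keyA (p : Fin 24) (hp : q p = 0) (x₁ x₂ x₃ x₄ : ZMod 6) :
    (E * rA ^ x₁.val * rC ^ x₂.val * rB ^ x₃.val * rD ^ x₄.val) p = E ((rA ^ x₁.val) p) := by
  simp only [Equiv.Perm.mul_apply,
    Equiv.Perm.pow_apply_eq_self_of_apply_eq_self (fixA p hp).2.2,
    Equiv.Perm.pow_apply_eq_self_of_apply_eq_self (fixA p hp).2.1,
    Equiv.Perm.pow_apply_eq_self_of_apply_eq_self (fixA p hp).1]

lemma keyB (p : Fin 24) (hp : q p = 1) (x₁ x₂ x₃ x₄ : ZMod 6) :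
    (E * rA ^ x₁.val * rC ^ x₂.val * rB ^ x₃.val * rD ^ x₄.val) p = E ((rB ^ x₃.val) p) := by
  have hz : q ((rB ^ x₃.val) p) = 1 := pow_pres presB hp _
  simp only [Equiv.Perm.mul_apply,
    Equiv.Perm.pow_apply_eq_self_of_apply_eq_self (fixB p hp).2.2,
    Equiv.Perm.pow_apply_eq_self_of_apply_eq_self (fixB _ hz).2.1,
    Equiv.Perm.pow_apply_eq_self_of_apply_eq_self (fixB _ hz).1]

lemma keyC (p : Fin 24) (hp : q p = 2) (x₁ x₂ x₃ x₄ : ZMod 6) :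
    (E * rA ^ x₁.val * rC ^ x₂.val * rB ^ x₃.val * rD ^ x₄.val) p = E ((rC ^ x₂.val) p) := by
  have hz : q ((rC ^ x₂.val) p) = 2 := pow_pres presC hp _
  simp only [Equiv.Perm.mul_apply,
    Equiv.Perm.pow_apply_eq_self_of_apply_eq_self (fixC p hp).2.2,
    Equiv.Perm.pow_apply_eq_self_of_apply_eq_self (fixC p hp).2.1,
    Equiv.Perm.pow_apply_eq_self_of_apply_eq_self (fixC _ hz).1]

lemma keyD (p : Fin 24) (hp : q p = 3) (x₁ x₂ x₃ x₄ : ZMod 6) :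
    (E * rA ^ x₁.val * rC ^ x₂.val * rB ^ x₃.val * rD ^ x₄.val) p = E ((rD ^ x₄.val) p) := by
  have hz : q ((rD ^ x₄.val) p) = 3 := pow_pres presD hp _
  simp only [Equiv.Perm.mul_apply,
    Equiv.Perm.pow_apply_eq_self_of_apply_eq_self (fixD _ hz).2.2,
    Equiv.Perm.pow_apply_eq_self_of_apply_eq_self (fixD _ hz).2.1,
    Equiv.Perm.pow_apply_eq_self_of_apply_eq_self (fixD _ hz).1]

lemma cardA_stay : ∀ p : Fin 24, q p = 0 →
    (Finset.univ.filter fun a : ZMod 6 => q (E ((rA ^ a.val) p)) = q p).card = 3 := by decide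
lemma cardA_nxt : ∀ p : Fin 24, q p = 0 →
    (Finset.univ.filter fun a : ZMod 6 => q (E ((rA ^ a.val) p)) = nxt (q p)).card = 3 := by decide
lemma cardB_stay : ∀ p : Fin 24, q p = 1 →
    (Finset.univ.filter fun a : ZMod 6 => q (E ((rB ^ a.val) p)) = q p).card = 3 := by decide
lemma cardB_nxt : ∀ p : Fin 24, q p = 1 →
    (Finset.univ.filter fun a : ZMod 6 => q (E ((rB ^ a.val) p)) = nxt (q p)).card = 3 := by decide
lemma cardC_stay : ∀ p : Fin 24, q p = 2 →
    (Finset.univ.filter fun a : ZMod 6 => q (E ((rC ^ a.val) p)) = q p).card = 3 := by decide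
lemma cardC_nxt : ∀ p : Fin 24, q p = 2 →
    (Finset.univ.filter fun a : ZMod 6 => q (E ((rC ^ a.val) p)) = nxt (q p)).card = 3 := by decide
lemma cardD_stay : ∀ p : Fin 24, q p = 3 →
    (Finset.univ.filter fun a : ZMod 6 => q (E ((rD ^ a.val) p)) = q p).card = 3 := by decide
lemma cardD_nxt : ∀ p : Fin 24, q p = 3 →
    (Finset.univ.filter fun a : ZMod 6 => q (E ((rD ^ a.val) p)) = nxt (q p)).card = 3 := by decide

/-- In one step of the chain, the occupant of any fixed position stays in its quadrant
with probability 1/2 and moves to the next quadrant with probability 1/2. -/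
theorem single_player_lazy_walk (p : Fin 24) :
    (∑ x₁ : ZMod 6, ∑ x₂ : ZMod 6, ∑ x₃ : ZMod 6, ∑ x₄ : ZMod 6,
        w (x₁, x₂) * w (x₃, x₄) *
          (if q ((E * rA ^ x₁.val * rC ^ x₂.val * rB ^ x₃.val * rD ^ x₄.val) p) = q p
           then 1 else 0) = (1/2 : ℝ)) ∧
    (∑ x₁ : ZMod 6, ∑ x₂ : ZMod 6, ∑ x₃ : ZMod 6, ∑ x₄ : ZMod 6,
        w (x₁, x₂) * w (x₃, x₄) *
          (if q ((E * rA ^ x₁.val * rC ^ x₂.val * rB ^ x₃.val * rD ^ x₄.val) p) = nxt (q p)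
           then 1 else 0) = (1/2 : ℝ)) := by
  have h4 : q p = 0 ∨ q p = 1 ∨ q p = 2 ∨ q p = 3 := by omega
  constructor
  · rcases h4 with h|h|h|h
    · simp only [keyA p h]
      rw [L1 (fun a => if q (E ((rA ^ a.val) p)) = q p then (1:ℝ) else 0),
          Finset.sum_boole, cardA_stay p h]
      norm_num
    · simp only [keyB p h]
      rw [L3 (fun a => if q (E ((rB ^ a.val) p)) = q p then (1:ℝ) else 0),
          Finset.sum_boole, cardB_stay p h]
      norm_num
    · simp only [keyC p h]
      rw [L2 (fun a => if q (E ((rC ^ a.val) p)) = q p then (1:ℝ) else 0),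
          Finset.sum_boole, cardC_stay p h]
      norm_num
    · simp only [keyD p h]
      rw [L4 (fun a => if q (E ((rD ^ a.val) p)) = q p then (1:ℝ) else 0),
          Finset.sum_boole, cardD_stay p h]
      norm_num
  · rcases h4 with h|h|h|h
    · simp only [keyA p h]
      rw [L1 (fun a => if q (E ((rA ^ a.val) p)) = nxt (q p) then (1:ℝ) else 0),
          Finset.sum_boole, cardA_nxt p h]
      norm_num
    · simp only [keyB p h]
      rw [L3 (fun a => if q (E ((rB ^ a.val) p)) = nxt (q p) then (1:ℝ) else 0),
          Finset.sum_boole, cardB_nxt p h]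
      norm_num
    · simp only [keyC p h]
      rw [L2 (fun a => if q (E ((rC ^ a.val) p)) = nxt (q p) then (1:ℝ) else 0),
          Finset.sum_boole, cardC_nxt p h]
      norm_num
    · simp only [keyD p h]
      rw [L4 (fun a => if q (E ((rD ^ a.val) p)) = nxt (q p) then (1:ℝ) else 0),
          Finset.sum_boole, cardD_nxt p h]
      norm_num

end Volleyball
end
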